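/- arXiv:2103.05316 — 5 statements merged into one kernel-verified Lean document; each statement's English description precedes it below -/
import Mathlib

section
/- For every p ∈ (0, 1/d), the critical curve satisfies the strict inequality q_c(p) > (1 − dp)/d^k. -/
open MeasureTheory ProbabilityTheory Filter

/-- Vertices of the tree `T_{d,k}`: finite sequences over `[d]`. The root is `[]`. -/
abbrev Vert (d : ℕ) := List (Fin d)

/-- A percolation configuration: a Boolean (open/closed) for every pair `(v, s)`;
the pair `(v, s)` represents the oriented edge from `v` to `v ++ s`.  Only pairs
with `s.length = 1` (short edges) or `s.length = k` (long edges) are actual edges. -/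
abbrev Config (d : ℕ) := (Vert d × List (Fin d)) → Bool

/-- One open oriented edge step from `v` to `w`. -/
def step (d k : ℕ) (ω : Config d) (v w : Vert d) : Prop :=
  ∃ s : List (Fin d), (s.length = 1 ∨ s.length = k) ∧ w = v ++ s ∧ ω (v, s) = true

/-- The cluster of a set `B` of vertices: all vertices reachable from `B`
by an oriented path of open edges (with the convention `B ⊆ cluster`). -/
def cluster (d k : ℕ) (ω : Config d) (B : Set (Vert d)) : Set (Vert d) :=
  {w | ∃ v ∈ B, Relation.ReflTransGen (step d k ω) v w}

/-- `μ` is the law of Bernoulli bond percolation on `T_{d,k}` in which,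
independently, every short edge is open with probability `p` and every
long edge is open with probability `q`. -/
def IsPercolation (d k : ℕ) (p q : ℝ) (μ : Measure (Config d)) : Prop :=
  IsProbabilityMeasure μ ∧
  iIndepFun (fun e (ω : Config d) => ω e) μ ∧
  (∀ v : Vert d, ∀ s : List (Fin d), s.length = 1 →
      (μ {ω | ω (v, s) = true}).toReal = p) ∧
  (∀ v : Vert d, ∀ s : List (Fin d), s.length = k →
      (μ {ω | ω (v, s) = true}).toReal = q)

/-- The critical curve `q_c(p) = inf {q : P_{p,q}(|C| = ∞) > 0}`. -/
noncomputable def qc (d k : ℕ) (μ : ℝ → ℝ → Measure (Config d)) (p : ℝ) : ℝ :=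
  sInf {q | q ∈ Set.Icc (0 : ℝ) 1 ∧
    0 < μ p q {ω | (cluster d k ω {([] : Vert d)}).Infinite}}

namespace Perco

open scoped ENNReal

variable {d k : ℕ}

/-- openness of a chain of blocks starting at `v`. -/
def chainOpen (ω : Config d) : Vert d → List (List (Fin d)) → Prop
  | _, [] => True
  | v, s :: L => ω (v, s) = true ∧ chainOpen ω (v ++ s) L

lemma flatten_map_singleton (s : List (Fin d)) : (s.map fun a => ([a] : List (Fin d))).flatten = s := by
  induction s with
  | nil => simp
  | cons a t ih => simp [ih]

lemma chainOpen_append {ω : Config d} (L₁ : List (List (Fin d))) :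
    ∀ (v : Vert d) (L₂ : List (List (Fin d))),
    chainOpen ω v (L₁ ++ L₂) ↔ chainOpen ω v L₁ ∧ chainOpen ω (v ++ L₁.flatten) L₂ := by
  induction L₁ with
  | nil => intro v L₂; simp [chainOpen]
  | cons s L ih =>
      intro v L₂
      simp [chainOpen, ih (v ++ s) L₂, List.append_assoc, and_assoc]

def validChain (k : ℕ) (L : List (List (Fin d))) : Prop :=
  ∀ s ∈ L, s.length = 1 ∨ s.length = k

lemma reach_of_chain {ω : Config d} (L : List (List (Fin d))) :
    ∀ v : Vert d, validChain k L → chainOpen ω v L →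
      Relation.ReflTransGen (step d k ω) v (v ++ L.flatten) := by
  induction L with
  | nil => intro v _ _; simp [Relation.ReflTransGen.refl]
  | cons s L ih =>
      intro v hval hop
      have h1 : step d k ω v (v ++ s) := ⟨s, hval s (by simp), rfl, hop.1⟩
      have h2 := ih (v ++ s) (fun t ht => hval t (by simp [ht])) hop.2
      have := Relation.ReflTransGen.head h1 h2
      simpa [List.append_assoc] using this

lemma chain_of_reach {ω : Config d} {v w : Vert d}
    (h : Relation.ReflTransGen (step d k ω) v w) :
    ∃ L, validChain k L ∧ w = v ++ L.flatten ∧ chainOpen ω v L := by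
  induction h with
  | refl => exact ⟨[], by simp [validChain], by simp, trivial⟩
  | tail _ hstep ih =>
      obtain ⟨L, hval, hw, hop⟩ := ih
      obtain ⟨s, hs, rfl, hsop⟩ := hstep
      refine ⟨L ++ [s], ?_, ?_, ?_⟩
      · intro t ht
        rcases List.mem_append.1 ht with h | h
        · exact hval t h
        · simpa using (List.mem_singleton.1 h) ▸ hs
      · simp [hw, List.append_assoc]
      · rw [chainOpen_append]
        exact ⟨hop, by simp [chainOpen, ← hw, hsop]⟩

def longs (L : List (List (Fin d))) : ℕ := (L.filter fun s => s.length ≠ 1).length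

/-- chain with the property that each long block has a closed parallel short path. -/
def goodChain (ω : Config d) (k : ℕ) : Vert d → List (List (Fin d)) → Prop
  | _, [] => True
  | v, s :: L => ω (v, s) = true ∧
      (s.length = 1 ∨ ¬ chainOpen ω v (s.map fun a => [a])) ∧ goodChain ω k (v ++ s) L

lemma goodChain_of_minimal {ω : Config d} (hk : 2 ≤ k) (L : List (List (Fin d))) :
    ∀ v : Vert d, validChain k L → chainOpen ω v L →
    (∀ L', validChain k L' → L'.flatten = L.flatten → chainOpen ω v L' → longs L ≤ longs L') →
    goodChain ω k v L := by
  induction L with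
  | nil => intro v _ _ _; trivial
  | cons s L ih =>
      intro v hval hop hmin
      have hs := hval s (by simp)
      refine ⟨hop.1, ?_, ?_⟩
      · by_cases h1 : s.length = 1
        · exact Or.inl h1
        · refine Or.inr fun hpar => ?_
          have hskl : s.length = k := hs.resolve_left h1
          -- replacement chain
          set L' : List (List (Fin d)) := (s.map fun a => [a]) ++ L with hL'
          have hflat : L'.flatten = (s :: L).flatten := by
            simp [hL', flatten_map_singleton]
          have hval' : validChain k L' := by
            intro t ht
            rcases List.mem_append.1 ht with h | h
            · obtain ⟨a, _, rfl⟩ := List.mem_map.1 h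
              exact Or.inl rfl
            · exact hval t (by simp [h])
          have hop' : chainOpen ω v L' := by
            rw [chainOpen_append]
            refine ⟨hpar, ?_⟩
            rw [flatten_map_singleton]
            exact hop.2
          have hlt : longs L' < longs (s :: L) := by
            have h1' : longs L' = longs L := by
              simp only [hL', longs, List.filter_append, List.length_append]
              have hnil : (List.filter (fun t => decide (t.length ≠ 1)) (s.map fun a => [a])) = [] := by
                simp [List.filter_eq_nil_iff]
              rw [hnil]
              simp
            have h2' : longs (s :: L) = longs L + 1 := by
              simp [longs, List.filter_cons, h1, Nat.add_comm]
            omega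
          have := hmin L' hval' hflat hop'
          omega
      · refine ih (v ++ s) (fun t ht => hval t (by simp [ht])) hop.2 ?_
        intro L'' hval'' hflat'' hop''
        have := hmin (s :: L'') (fun t ht => by
            rcases List.mem_cons.1 ht with h | h
            · exact h ▸ hs
            · exact hval'' t h)
          (by simp [hflat'']) ⟨hop.1, hop''⟩
        have h2' : ∀ M, longs (s :: M) = longs M + (if s.length = 1 then 0 else 1) := by
          intro M; by_cases h1 : s.length = 1 <;> simp [longs, List.filter_cons, h1, Nat.add_comm]
        rw [h2', h2'] at this
        omega

lemma exists_goodChain {ω : Config d} {w : Vert d} (hk : 2 ≤ k)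
    (h : Relation.ReflTransGen (step d k ω) ([] : Vert d) w) :
    ∃ L, validChain k L ∧ w = L.flatten ∧ goodChain ω k ([] : Vert d) L := by
  classical
  set N : Set ℕ := {n | ∃ L, validChain k L ∧ w = L.flatten ∧ chainOpen ω ([] : Vert d) L ∧ longs L = n} with hN
  have hne : N.Nonempty := by
    obtain ⟨L, hval, hw, hop⟩ := chain_of_reach h
    exact ⟨longs L, L, hval, by simpa using hw, hop, rfl⟩
  obtain ⟨L, hval, hw, hop, hlongs⟩ := Nat.sInf_mem hne
  refine ⟨L, hval, hw, goodChain_of_minimal hk L ([] : Vert d) hval hop ?_⟩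
  intro L' hval' hflat' hop'
  have : longs L' ∈ N := ⟨L', hval', by rw [hw, ← hflat'], hop', rfl⟩
  rw [hlongs]
  exact Nat.sInf_le this

/-- find first closed edge in a failed short chain -/
lemma exists_fail {ω : Config d} (s : List (Fin d)) :
    ∀ v : Vert d, ¬ chainOpen ω v (s.map fun a => [a]) →
    ∃ pre a post, s = pre ++ a :: post ∧ chainOpen ω v (pre.map fun b => [b]) ∧
      ω (v ++ pre, [a]) = false := by
  induction s with
  | nil => intro v h; exact absurd trivial h
  | cons a t ih =>
      intro v h
      cases hb : ω (v, [a]) with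
      | false => exact ⟨[], a, t, by simp, trivial, by simpa using hb⟩
      | true =>
          have h' : ¬ chainOpen ω (v ++ [a]) (t.map fun b => [b]) := by
            intro hc; exact h ⟨hb, hc⟩
          obtain ⟨pre, b, post, ht, hopen, hcl⟩ := ih (v ++ [a]) h'
          refine ⟨a :: pre, b, post, by simp [ht], ⟨hb, hopen⟩, by simpa [List.append_assoc] using hcl⟩


/-! ### Shapes, constraint lists -/

def sizeS (k : ℕ) : List (Unit ⊕ Fin k) → ℕ
  | [] => 0
  | Sum.inl _ :: σ => sizeS k σ + 1
  | Sum.inr _ :: σ => sizeS k σ + k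

def chainC : Vert d → List (Fin d) → List ((Vert d × List (Fin d)) × Bool)
  | _, [] => []
  | v, a :: t => ((v, [a]), true) :: chainC (v ++ [a]) t

def consC (k : ℕ) : Vert d → List (Fin d) → List (Unit ⊕ Fin k) →
    List ((Vert d × List (Fin d)) × Bool)
  | _, _, [] => []
  | v, r, Sum.inl _ :: σ =>
      match r with
      | [] => []
      | a :: r' => ((v, [a]), true) :: consC k (v ++ [a]) r' σ
  | v, r, Sum.inr i :: σ =>
      ((v, r.take k), true) :: (chainC v (r.take (i : ℕ)) ++
        ([((v ++ r.take (i : ℕ), (r.drop (i : ℕ)).take 1), false)] ++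
          consC k (v ++ r.take k) (r.drop k) σ))

def sat (ω : Config d) (cs : List ((Vert d × List (Fin d)) × Bool)) : Prop :=
  ∀ c ∈ cs, ω c.1 = c.2

lemma sat_nil {ω : Config d} : sat ω ([] : List ((Vert d × List (Fin d)) × Bool)) := by intro c hc; cases hc

lemma sat_cons {ω : Config d} {c} {cs : List ((Vert d × List (Fin d)) × Bool)} :
    sat ω (c :: cs) ↔ ω c.1 = c.2 ∧ sat ω cs := by
  simp [sat]

lemma sat_append {ω : Config d} {cs₁ cs₂ : List ((Vert d × List (Fin d)) × Bool)} :
    sat ω (cs₁ ++ cs₂) ↔ sat ω cs₁ ∧ sat ω cs₂ := by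
  simp [sat, or_imp, forall_and]

lemma chainC_sat {ω : Config d} (l : List (Fin d)) :
    ∀ v : Vert d, chainOpen ω v (l.map fun a => [a]) → sat ω (chainC v l) := by
  induction l with
  | nil => intro v _; exact sat_nil
  | cons a t ih =>
      intro v h
      rw [List.map_cons, chainOpen] at h
      exact sat_cons.2 ⟨h.1, ih (v ++ [a]) h.2⟩

lemma sat_of_goodChain {ω : Config d} (hk : 2 ≤ k) (L : List (List (Fin d))) :
    ∀ v : Vert d, validChain k L → goodChain ω k v L →
    ∃ σ : List (Unit ⊕ Fin k), sizeS k σ = L.flatten.length ∧ sat ω (consC k v L.flatten σ) := by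
  induction L with
  | nil => exact fun v _ _ => ⟨[], rfl, sat_nil⟩
  | cons s L ih =>
      intro v hval hgood
      obtain ⟨hedge, hdis, htail⟩ := hgood
      obtain ⟨σ', hσ'size, hσ'sat⟩ := ih (v ++ s) (fun t ht => hval t (by simp [ht])) htail
      by_cases h1 : s.length = 1
      · obtain ⟨a, rfl⟩ := List.length_eq_one_iff.1 h1
        refine ⟨Sum.inl () :: σ', ?_, ?_⟩
        · simp [sizeS, hσ'size]
        · have : ([a] :: L).flatten = a :: L.flatten := by simp
          rw [this, consC]
          exact sat_cons.2 ⟨hedge, hσ'sat⟩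
      · have hsk : s.length = k := (hval s (by simp)).resolve_left h1
        have hfail : ¬ chainOpen ω v (s.map fun a => [a]) := hdis.resolve_left h1
        obtain ⟨pre, a, post, hs, hpre, hcl⟩ := exists_fail s v hfail
        have hik : pre.length < k := by
          have := hsk ▸ congrArg List.length hs
          simp at this
          omega
        refine ⟨Sum.inr ⟨pre.length, hik⟩ :: σ', ?_, ?_⟩
        · simp [sizeS, hσ'size, hsk, Nat.add_comm]
        · have hflat : (s :: L).flatten = s ++ L.flatten := by simp
          rw [hflat, consC]
          have htake_k : (s ++ L.flatten).take k = s := by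
            rw [← hsk]; exact List.take_left
          have hr : s ++ L.flatten = pre ++ (a :: (post ++ L.flatten)) := by
            simp [hs]
          have htake_i : (s ++ L.flatten).take pre.length = pre := by
            rw [hr]; exact List.take_left
          have hdrop_i : (s ++ L.flatten).drop pre.length = a :: (post ++ L.flatten) := by
            rw [hr]; exact List.drop_left
          have hdrop_k : (s ++ L.flatten).drop k = L.flatten := by
            rw [← hsk]; exact List.drop_left
          rw [htake_k, htake_i, hdrop_i, hdrop_k]
          refine sat_cons.2 ⟨hedge, sat_append.2 ⟨chainC_sat pre v hpre, sat_append.2 ⟨?_, hσ'sat⟩⟩⟩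
          intro c hc
          rcases List.mem_singleton.1 hc with rfl
          simpa using hcl


/-! ### Distinctness of constraint coordinates -/

def Rel : ((Vert d × List (Fin d)) × Bool) → ((Vert d × List (Fin d)) × Bool) → Prop :=
  fun a b => a.1.1.length < b.1.1.length ∨
    (a.1.1.length = b.1.1.length ∧ a.1.2.length ≠ b.1.2.length)

lemma chainC_mem (l : List (Fin d)) :
    ∀ (v : Vert d) c, c ∈ chainC v l →
      c.1.2.length = 1 ∧ v.length ≤ c.1.1.length ∧ c.1.1.length < v.length + l.length := by
  induction l with
  | nil => intro v c hc; cases hc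
  | cons a t ih =>
      intro v c hc
      rw [chainC] at hc
      rcases List.mem_cons.1 hc with rfl | hc
      · exact ⟨rfl, le_refl _, by simp⟩
      · obtain ⟨h1, h2, h3⟩ := ih (v ++ [a]) c hc
        refine ⟨h1, ?_, ?_⟩ <;> simp at h2 h3 ⊢ <;> omega

lemma chainC_pairwise (l : List (Fin d)) :
    ∀ v : Vert d, List.Pairwise (fun a b => a.1.1.length < b.1.1.length) (chainC v l) := by
  induction l with
  | nil => intro v; exact List.Pairwise.nil
  | cons a t ih =>
      intro v
      rw [chainC]
      refine List.Pairwise.cons ?_ (ih (v ++ [a]))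
      intro c hc
      have := (chainC_mem t (v ++ [a]) c hc).2.1
      simp at this ⊢
      omega

lemma consC_level (σ : List (Unit ⊕ Fin k)) :
    ∀ (v : Vert d) (r : List (Fin d)) c, c ∈ consC k v r σ → v.length ≤ c.1.1.length := by
  induction σ with
  | nil => intro v r c hc; cases hc
  | cons e σ ih =>
      intro v r c hc
      match e with
      | Sum.inl _ =>
          match r with
          | [] => cases hc
          | a :: r' =>
              rw [consC] at hc
              rcases List.mem_cons.1 hc with rfl | hc
              · exact le_refl _
              · have := ih (v ++ [a]) r' c hc
                simp at this; omega
      | Sum.inr i =>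
          rw [consC] at hc
          rcases List.mem_cons.1 hc with rfl | hc
          · exact le_refl _
          rcases List.mem_append.1 hc with hc | hc
          · exact (chainC_mem _ v c hc).2.1
          rcases List.mem_append.1 hc with hc | hc
          · rcases List.mem_singleton.1 hc with rfl
            simp
          · have := ih (v ++ r.take k) (r.drop k) c hc
            simp at this; omega

lemma consC_pairwise (hk : 2 ≤ k) (σ : List (Unit ⊕ Fin k)) :
    ∀ (v : Vert d) (r : List (Fin d)), sizeS k σ = r.length →
      List.Pairwise (Rel (d := d)) (consC k v r σ) := by
  induction σ with
  | nil => intro v r _; exact List.Pairwise.nil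
  | cons e σ ih =>
      intro v r hsize
      match e with
      | Sum.inl _ =>
          rw [sizeS] at hsize
          match r with
          | [] => simp at hsize
          | a :: r' =>
              rw [consC]
              refine List.Pairwise.cons ?_ (ih (v ++ [a]) r' (by simpa using hsize))
              intro c hc
              have := consC_level σ (v ++ [a]) r' c hc
              left
              simp at this ⊢
              omega
      | Sum.inr i =>
          rw [sizeS] at hsize
          have hkr : k ≤ r.length := by omega
          have hir : (i : ℕ) < r.length := lt_of_lt_of_le i.2 hkr
          have htakei : (r.take (i : ℕ)).length = (i : ℕ) := by
            simp; omega
          have htakek : (r.take k).length = k := by simp; omega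
          rw [consC]
          -- facts about members of the rest
          have hrest : ∀ c, c ∈ chainC v (r.take (i : ℕ)) ++
              ([((v ++ r.take (i : ℕ), (r.drop (i : ℕ)).take 1), false)] ++
                consC k (v ++ r.take k) (r.drop k) σ) →
              (v.length ≤ c.1.1.length ∧
                (c.1.2.length = 1 ∨ v.length + k ≤ c.1.1.length)) := by
            intro c hc
            rcases List.mem_append.1 hc with hc | hc
            · obtain ⟨h1, h2, _⟩ := chainC_mem _ v c hc
              exact ⟨h2, Or.inl h1⟩
            rcases List.mem_append.1 hc with hc | hc
            · rcases List.mem_singleton.1 hc with rfl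
              refine ⟨by simp, Or.inl ?_⟩
              have : (r.drop (i : ℕ)).length = r.length - (i : ℕ) := by simp
              rw [List.length_take]
              omega
            · have := consC_level σ (v ++ r.take k) (r.drop k) c hc
              simp [htakek] at this
              exact ⟨by omega, Or.inr (by omega)⟩
          refine List.Pairwise.cons ?_ ?_
          · intro c hc
            obtain ⟨hle, hdis⟩ := hrest c hc
            rcases lt_or_eq_of_le hle with hlt | heq
            · exact Or.inl hlt
            · refine Or.inr ⟨heq, ?_⟩
              rcases hdis with h1 | h2
              · simp [htakek, h1]; omega
              · omega
          -- pairwise within the rest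
          rw [List.pairwise_append]
          refine ⟨?_, ?_, ?_⟩
          · exact (chainC_pairwise _ v).imp (fun h => Or.inl h)
          · rw [List.pairwise_append]
            refine ⟨List.pairwise_singleton _ _, ih (v ++ r.take k) (r.drop k) (by simp; omega), ?_⟩
            intro a ha b hb
            rcases List.mem_singleton.1 ha with rfl
            have := consC_level σ (v ++ r.take k) (r.drop k) b hb
            left
            simp [htakek, htakei] at this ⊢
            omega
          · intro a ha b hb
            obtain ⟨_, _, halt⟩ := chainC_mem _ v a ha
            rw [htakei] at halt
            left
            rcases List.mem_append.1 hb with hb | hb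
            · rcases List.mem_singleton.1 hb with rfl
              simp [htakei]; omega
            · have := consC_level σ (v ++ r.take k) (r.drop k) b hb
              simp [htakek] at this
              omega

lemma consC_nodup_fst (hk : 2 ≤ k) (σ : List (Unit ⊕ Fin k)) (v : Vert d)
    (r : List (Fin d)) (hsize : sizeS k σ = r.length) :
    ((consC k v r σ).map Prod.fst).Nodup := by
  rw [List.Nodup, List.pairwise_map]
  refine (consC_pairwise hk σ v r hsize).imp ?_
  rintro a b (h | ⟨h1, h2⟩) heq
  · rw [heq] at h; exact lt_irrefl _ h
  · exact h2 (by rw [heq])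


/-! ### Probability computations -/

noncomputable def wWeight (p q : ℝ) : List (Unit ⊕ Fin k) → ℝ
  | [] => 1
  | Sum.inl _ :: σ => p * wWeight p q σ
  | Sum.inr i :: σ => (q * ((p ^ (i : ℕ)) * (1 - p))) * wWeight p q σ

lemma wWeight_nonneg {p q : ℝ} (hp0 : 0 ≤ p) (hp1 : p ≤ 1) (hq0 : 0 ≤ q) :
    ∀ σ : List (Unit ⊕ Fin k), 0 ≤ wWeight p q σ
  | [] => zero_le_one
  | Sum.inl _ :: σ => mul_nonneg hp0 (wWeight_nonneg hp0 hp1 hq0 σ)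
  | Sum.inr i :: σ => mul_nonneg
      (mul_nonneg hq0 (mul_nonneg (pow_nonneg hp0 _) (by linarith)))
      (wWeight_nonneg hp0 hp1 hq0 σ)

section Measure

variable {μ : Measure (Config d)} [IsProbabilityMeasure μ] {p q : ℝ}

lemma coord_event_eq (e : Vert d × List (Fin d)) (b : Bool) :
    {ω : Config d | ω e = b} = (fun ω : Config d => ω e) ⁻¹' {b} := rfl

lemma coord_meas (e : Vert d × List (Fin d)) (b : Bool) :
    MeasurableSet {ω : Config d | ω e = b} := by
  rw [coord_event_eq]
  exact measurable_pi_apply e (measurableSet_singleton b)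

lemma meas_sat (hind : iIndepFun (fun e (ω : Config d) => ω e) μ)
    (cs : List ((Vert d × List (Fin d)) × Bool)) (hnd : (cs.map Prod.fst).Nodup) :
    μ {ω | sat ω cs} = (cs.map fun c => μ {ω : Config d | ω c.1 = c.2}).prod := by
  classical
  set S : Finset (Vert d × List (Fin d)) := (cs.map Prod.fst).toFinset with hS
  set sets : (Vert d × List (Fin d)) → Set Bool := fun e => {b | (e, b) ∈ cs} with hsets
  have hmeas : ∀ e, e ∈ S → MeasurableSet (sets e) :=
    fun e _ => (Set.to_countable _).measurableSet
  have hprod := hind.measure_inter_preimage_eq_mul S hmeas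
  have hinj : ∀ c ∈ cs, ∀ c' ∈ cs, c.1 = c'.1 → c = c' :=
    fun c hc c' hc' h => List.inj_on_of_nodup_map hnd hc hc' h
  have hev : {ω : Config d | sat ω cs} =
      ⋂ e ∈ S, (fun ω : Config d => ω e) ⁻¹' sets e := by
    ext ω
    simp only [Set.mem_setOf_eq, Set.mem_iInter, Set.mem_preimage, hS, List.mem_toFinset,
      List.mem_map, hsets, sat]
    constructor
    · rintro h e ⟨c, hc, rfl⟩
      have := h c hc
      rw [this]
      simpa using hc
    · intro h c hc
      have hmem : (c.1, ω c.1) ∈ cs := h c.1 ⟨c, hc, rfl⟩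
      have := hinj _ hmem _ hc rfl
      exact congrArg Prod.snd this
  rw [hev, hprod]
  have h1 : S.prod (fun e => μ ((fun ω : Config d => ω e) ⁻¹' sets e)) =
      ((cs.map Prod.fst).map (fun e => μ ((fun ω : Config d => ω e) ⁻¹' sets e))).prod :=
    List.prod_toFinset _ hnd
  rw [h1, List.map_map]
  congr 1
  refine List.map_congr_left ?_
  intro c hc
  have hsetseq : sets c.1 = {c.2} := by
    ext b
    simp only [hsets, Set.mem_setOf_eq, Set.mem_singleton_iff]
    constructor
    · intro hb
      have := hinj _ hb _ hc rfl
      exact congrArg Prod.snd this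
    · rintro rfl; exact hc
  simp only [Function.comp_apply, hsetseq, ← coord_event_eq]

variable (hshort : ∀ (v : Vert d) (s : List (Fin d)), s.length = 1 →
      (μ {ω | ω (v, s) = true}).toReal = p)
variable (hlong : ∀ (v : Vert d) (s : List (Fin d)), s.length = k →
      (μ {ω | ω (v, s) = true}).toReal = q)

include hshort in
lemma meas_true_short {v : Vert d} {s : List (Fin d)} (hs : s.length = 1) :
    μ {ω : Config d | ω (v, s) = true} = ENNReal.ofReal p := by
  rw [← hshort v s hs, ENNReal.ofReal_toReal (measure_ne_top μ _)]

include hlong in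
lemma meas_true_long {v : Vert d} {s : List (Fin d)} (hs : s.length = k) :
    μ {ω : Config d | ω (v, s) = true} = ENNReal.ofReal q := by
  rw [← hlong v s hs, ENNReal.ofReal_toReal (measure_ne_top μ _)]

include hshort in
lemma meas_false_short (hp0 : 0 ≤ p) {v : Vert d} {s : List (Fin d)} (hs : s.length = 1) :
    μ {ω : Config d | ω (v, s) = false} = ENNReal.ofReal (1 - p) := by
  have hc : {ω : Config d | ω (v, s) = false} = {ω : Config d | ω (v, s) = true}ᶜ := by
    ext ω; cases h : ω (v, s) <;> simp [h]
  rw [hc, measure_compl (coord_meas _ _) (measure_ne_top μ _),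
    meas_true_short hshort hs, measure_univ, ENNReal.ofReal_sub _ hp0, ENNReal.ofReal_one]

include hshort in
lemma prod_chainC (l : List (Fin d)) :
    ∀ v : Vert d, ((chainC v l).map fun c => μ {ω : Config d | ω c.1 = c.2}).prod =
      ENNReal.ofReal p ^ l.length := by
  induction l with
  | nil => intro v; simp [chainC]
  | cons a t ih =>
      intro v
      rw [chainC, List.map_cons, List.prod_cons, ih (v ++ [a])]
      rw [meas_true_short hshort (by simp)]
      rw [List.length_cons, pow_succ]
      ring

include hshort hlong in
lemma prod_consC (hp0 : 0 ≤ p) (hp1 : p ≤ 1) (hq0 : 0 ≤ q) (σ : List (Unit ⊕ Fin k)) :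
    ∀ (v : Vert d) (r : List (Fin d)), sizeS k σ = r.length →
      ((consC k v r σ).map fun c => μ {ω : Config d | ω c.1 = c.2}).prod =
        ENNReal.ofReal (wWeight p q σ) := by
  induction σ with
  | nil => intro v r _; simp [consC, wWeight]
  | cons e σ ih =>
      intro v r hsize
      match e with
      | Sum.inl _ =>
          rw [sizeS] at hsize
          match r with
          | [] => simp at hsize
          | a :: r' =>
              rw [consC, List.map_cons, List.prod_cons,
                ih (v ++ [a]) r' (by simpa using hsize),
                meas_true_short hshort (by simp), wWeight,
                ENNReal.ofReal_mul hp0]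
      | Sum.inr i =>
          rw [sizeS] at hsize
          have hkr : k ≤ r.length := by omega
          have hir : (i : ℕ) < r.length := lt_of_lt_of_le i.2 hkr
          rw [consC, List.map_cons, List.prod_cons, List.map_append, List.prod_append,
            List.map_append, List.prod_append]
          rw [meas_true_long hlong (by simp; omega)]
          rw [prod_chainC hshort]
          have hlen1 : ((r.drop (i : ℕ)).take 1).length = 1 := by
            simp; omega
          rw [List.map_singleton, List.prod_singleton, meas_false_short hshort hp0 hlen1]
          rw [ih (v ++ r.take k) (r.drop k) (by simp; omega)]
          rw [List.length_take, min_eq_left (le_of_lt hir)]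
          rw [wWeight]
          rw [ENNReal.ofReal_mul (mul_nonneg hq0 (mul_nonneg (pow_nonneg hp0 _) (by linarith))), ENNReal.ofReal_mul hq0,
            ENNReal.ofReal_mul (pow_nonneg hp0 _), ENNReal.ofReal_pow hp0]
          ring

end Measure

/-! ### Finsets of shapes and words -/

lemma sizeS_ge_length (hk1 : 1 ≤ k) : ∀ σ : List (Unit ⊕ Fin k), σ.length ≤ sizeS k σ
  | [] => le_refl 0
  | Sum.inl _ :: σ => by
      rw [sizeS, List.length_cons]
      have := sizeS_ge_length hk1 σ
      omega
  | Sum.inr _ :: σ => by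
      rw [sizeS, List.length_cons]
      have := sizeS_ge_length hk1 σ
      omega

lemma sizeS_eq_zero (hk1 : 1 ≤ k) {σ : List (Unit ⊕ Fin k)} (h : sizeS k σ = 0) : σ = [] := by
  match σ with
  | [] => rfl
  | Sum.inl _ :: σ => rw [sizeS] at h; omega
  | Sum.inr _ :: σ => rw [sizeS] at h; omega

def shapesF (k m : ℕ) : Finset (List (Unit ⊕ Fin k)) :=
  ((Finset.univ : Finset (Σ j : Fin (m+1), Fin (j : ℕ) → Unit ⊕ Fin k)).image
    (fun x => List.ofFn x.2)).filter (fun σ => sizeS k σ = m)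

lemma mem_shapesF (hk1 : 1 ≤ k) {m : ℕ} {σ : List (Unit ⊕ Fin k)} :
    σ ∈ shapesF k m ↔ sizeS k σ = m := by
  constructor
  · intro h; exact (Finset.mem_filter.1 h).2
  · intro h
    refine Finset.mem_filter.2 ⟨Finset.mem_image.2 ?_, h⟩
    have hlen : σ.length < m + 1 := by
      have := sizeS_ge_length hk1 σ
      omega
    exact ⟨⟨⟨σ.length, hlen⟩, σ.get⟩, Finset.mem_univ _, List.ofFn_get σ⟩

lemma shapesF_zero (hk1 : 1 ≤ k) : shapesF k 0 = {([] : List (Unit ⊕ Fin k))} := by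
  ext σ
  rw [mem_shapesF hk1, Finset.mem_singleton]
  constructor
  · intro h; exact sizeS_eq_zero hk1 h
  · rintro rfl; rfl

lemma shapesF_succ (hk1 : 1 ≤ k) (m : ℕ) :
    shapesF k (m + 1) = ((shapesF k m).image (List.cons (Sum.inl ()))) ∪
      (Finset.univ : Finset (Fin k)).biUnion
        (fun i => if k ≤ m + 1 then (shapesF k (m + 1 - k)).image (List.cons (Sum.inr i)) else ∅) := by
  ext σ
  simp only [mem_shapesF hk1, Finset.mem_union, Finset.mem_image, Finset.mem_biUnion,
    Finset.mem_univ, true_and]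
  constructor
  · intro hσ
    match σ with
    | [] => rw [sizeS] at hσ; omega
    | Sum.inl u :: σ' =>
        left
        rw [sizeS] at hσ
        cases u
        exact ⟨σ', by omega, rfl⟩
    | Sum.inr i :: σ' =>
        right
        rw [sizeS] at hσ
        have hkm : k ≤ m + 1 := by omega
        refine ⟨i, ?_⟩
        rw [if_pos hkm]
        exact Finset.mem_image.2 ⟨σ', (mem_shapesF hk1).2 (by omega), rfl⟩
  · rintro (⟨σ', hσ', rfl⟩ | ⟨i, hi⟩)
    · rw [sizeS]; omega
    · by_cases hkm : k ≤ m + 1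
      · rw [if_pos hkm] at hi
        obtain ⟨σ', hσ', rfl⟩ := Finset.mem_image.1 hi
        rw [sizeS, (mem_shapesF hk1).1 hσ']
        omega
      · rw [if_neg hkm] at hi
        cases hi

lemma sum_shapesF_succ (hk1 : 1 ≤ k) {p q : ℝ} (m : ℕ) :
    (∑ σ ∈ shapesF k (m + 1), wWeight p q σ) =
      p * (∑ σ ∈ shapesF k m, wWeight p q σ) +
      (if k ≤ m + 1 then
        (q * (1 - p ^ k)) * (∑ σ ∈ shapesF k (m + 1 - k), wWeight p q σ) else 0) := by
  classical
  rw [shapesF_succ hk1 m]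
  rw [Finset.sum_union ?hdisj]
  case hdisj =>
    rw [Finset.disjoint_left]
    intro σ h1 h2
    obtain ⟨σ', _, rfl⟩ := Finset.mem_image.1 h1
    rw [Finset.mem_biUnion] at h2
    obtain ⟨i, _, hi⟩ := h2
    by_cases hkm : k ≤ m + 1
    · rw [if_pos hkm] at hi
      obtain ⟨σ'', _, heq⟩ := Finset.mem_image.1 hi
      simp at heq
    · rw [if_neg hkm] at hi; cases hi
  rw [Finset.sum_biUnion ?hpd]
  case hpd =>
    intro i _ j _ hij
    by_cases hkm : k ≤ m + 1
    · simp only [if_pos hkm]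
      refine Finset.disjoint_left.2 ?_
      intro σ h1 h2
      obtain ⟨σ', _, rfl⟩ := Finset.mem_image.1 h1
      obtain ⟨σ'', _, heq⟩ := Finset.mem_image.1 h2
      simp at heq
      exact hij (by simp [heq.1])
    · simp [if_neg hkm]
  have h1 : Finset.sum ((shapesF k m).image (List.cons (Sum.inl ()))) (wWeight p q) =
      p * (∑ σ ∈ shapesF k m, wWeight p q σ) := by
    rw [Finset.sum_image (by intro a _ b _ h; simpa using h), Finset.mul_sum]
    refine Finset.sum_congr rfl ?_
    intro σ _
    rw [wWeight]
  rw [h1]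
  congr 1
  by_cases hkm : k ≤ m + 1
  · simp only [if_pos hkm]
    have h2 : ∀ i : Fin k, Finset.sum ((shapesF k (m + 1 - k)).image (List.cons (Sum.inr i)))
        (wWeight p q) = (q * ((p ^ (i : ℕ)) * (1 - p))) * (∑ σ ∈ shapesF k (m + 1 - k), wWeight p q σ) := by
      intro i
      rw [Finset.sum_image (by intro a _ b _ h; simpa using h), Finset.mul_sum]
      refine Finset.sum_congr rfl ?_
      intro σ _
      rw [wWeight]
    calc (∑ i : Fin k, Finset.sum ((shapesF k (m + 1 - k)).image (List.cons (Sum.inr i))) (wWeight p q))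
        = (∑ i : Fin k, (q * ((p ^ (i : ℕ)) * (1 - p)))) * (∑ σ ∈ shapesF k (m + 1 - k), wWeight p q σ) := by
          rw [Finset.sum_mul]
          exact Finset.sum_congr rfl fun i _ => h2 i
      _ = (q * (1 - p ^ k)) * (∑ σ ∈ shapesF k (m + 1 - k), wWeight p q σ) := by
          congr 1
          have hgeom := geom_sum_mul p k
          rw [Fin.sum_univ_eq_sum_range (fun i => q * ((p ^ i) * (1 - p)))]
          have : (∑ i ∈ Finset.range k, q * (p ^ i * (1 - p))) =
              q * ((1 - p) * (∑ i ∈ Finset.range k, p ^ i)) := by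
            rw [Finset.mul_sum, Finset.mul_sum]
            exact Finset.sum_congr rfl fun i _ => by ring
          rw [this]
          have h3 : (1 - p) * (∑ i ∈ Finset.range k, p ^ i) = 1 - p ^ k := by
            have h4 := geom_sum_mul p k
            linear_combination -h4
          rw [h3]
  · simp only [if_neg hkm]
    refine Finset.sum_eq_zero ?_
    intro i _
    simp [if_neg hkm]

lemma sum_shapesF_le (hk : 2 ≤ k) {p q τ : ℝ} (hp0 : 0 ≤ p) (hp1 : p ≤ 1) (hq0 : 0 ≤ q)
    (hτ0 : 0 ≤ τ) (hpτ : p ≤ τ)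
    (hmain : p * τ ^ (k - 1) + q * (1 - p ^ k) ≤ τ ^ k) :
    ∀ m, (∑ σ ∈ shapesF k m, wWeight p q σ) ≤ τ ^ m := by
  have hk1 : 1 ≤ k := by omega
  intro m
  induction m using Nat.strong_induction_on with
  | _ m ih =>
    match m with
    | 0 => rw [shapesF_zero hk1]; simp [wWeight]
    | Nat.succ m =>
      rw [sum_shapesF_succ hk1 m]
      have hq' : 0 ≤ q * (1 - p ^ k) := mul_nonneg hq0 (by
        have := pow_le_one₀ hp0 hp1 (n := k); linarith)
      by_cases hkm : k ≤ m + 1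
      · rw [if_pos hkm]
        have ih1 : (∑ σ ∈ shapesF k m, wWeight p q σ) ≤ τ ^ m := ih m (by omega)
        have ih2 : (∑ σ ∈ shapesF k (m + 1 - k), wWeight p q σ) ≤ τ ^ (m + 1 - k) :=
          ih (m + 1 - k) (by omega)
        have hb : p * (∑ σ ∈ shapesF k m, wWeight p q σ) +
            q * (1 - p ^ k) * (∑ σ ∈ shapesF k (m + 1 - k), wWeight p q σ) ≤
            p * τ ^ m + q * (1 - p ^ k) * τ ^ (m + 1 - k) := by
          have := mul_le_mul_of_nonneg_left ih1 hp0
          have := mul_le_mul_of_nonneg_left ih2 hq'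
          linarith
        refine hb.trans ?_
        obtain ⟨a, ha⟩ : ∃ a, m + 1 = a + k := ⟨m + 1 - k, by omega⟩
        have e1 : τ ^ m = τ ^ a * τ ^ (k - 1) := by rw [← pow_add]; congr 1; omega
        have e2 : τ ^ (m + 1) = τ ^ a * τ ^ k := by rw [ha, pow_add]
        have e3 : τ ^ (m + 1 - k) = τ ^ a := by congr 1; omega
        rw [e1, e2, e3]
        have := mul_le_mul_of_nonneg_left hmain (pow_nonneg hτ0 a)
        nlinarith [this]
      · rw [if_neg hkm, add_zero]
        have ih1 : (∑ σ ∈ shapesF k m, wWeight p q σ) ≤ τ ^ m := ih m (by omega)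
        calc p * (∑ σ ∈ shapesF k m, wWeight p q σ) ≤ p * τ ^ m :=
              mul_le_mul_of_nonneg_left ih1 hp0
          _ ≤ τ * τ ^ m := mul_le_mul_of_nonneg_right hpτ (pow_nonneg hτ0 _)
          _ = τ ^ (m + 1) := by rw [pow_succ]; ring

/-! ### Words, window -/

def wordsF (d m : ℕ) : Finset (Vert d) :=
  (Finset.univ : Finset (Fin m → Fin d)).image List.ofFn

lemma mem_wordsF {m : ℕ} {w : Vert d} : w ∈ wordsF d m ↔ w.length = m := by
  constructor
  · intro h
    obtain ⟨f, _, rfl⟩ := Finset.mem_image.1 h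
    simp
  · intro h
    subst h
    exact Finset.mem_image.2 ⟨w.get, Finset.mem_univ _, List.ofFn_get w⟩

lemma card_wordsF (m : ℕ) : (wordsF d m).card ≤ d ^ m := by
  refine (Finset.card_image_le).trans ?_
  simp [Fintype.card_fun]

lemma window {ω : Config d} (hk1 : 1 ≤ k) (n : ℕ) (L : List (List (Fin d))) :
    ∀ v : Vert d, validChain k L → chainOpen ω v L → v.length < n + k →
      n ≤ v.length + L.flatten.length →
      ∃ u, Relation.ReflTransGen (step d k ω) v u ∧ n ≤ u.length ∧ u.length < n + k := by
  induction L with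
  | nil =>
      intro v _ _ h1 h2
      exact ⟨v, Relation.ReflTransGen.refl, by simpa using h2, h1⟩
  | cons s L ih =>
      intro v hval hop h1 h2
      by_cases hn : n ≤ v.length
      · exact ⟨v, Relation.ReflTransGen.refl, hn, h1⟩
      · have hs : s.length = 1 ∨ s.length = k := hval s (by simp)
        have hsk : s.length ≤ k := by rcases hs with h | h <;> omega
        have hstep : step d k ω v (v ++ s) := ⟨s, hs, rfl, hop.1⟩
        obtain ⟨u, hu, hu1, hu2⟩ := ih (v ++ s)
          (fun t ht => hval t (by simp [ht])) hop.2
          (by simp; omega) (by simp at h2 ⊢; omega)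
        exact ⟨u, Relation.ReflTransGen.head hstep hu, hu1, hu2⟩

lemma exists_window_vertex {ω : Config d} (hk : 2 ≤ k) (n : ℕ)
    (hinf : (cluster d k ω {([] : Vert d)}).Infinite) :
    ∃ u, n ≤ u.length ∧ u.length < n + k ∧
      Relation.ReflTransGen (step d k ω) ([] : Vert d) u := by
  have hfin : Set.Finite {w : Vert d | w.length < n} := by
    refine Set.Finite.subset (Finset.finite_toSet ((Finset.range n).biUnion (wordsF d))) ?_
    intro w hw
    exact Finset.mem_coe.2 (Finset.mem_biUnion.2
      ⟨w.length, Finset.mem_range.2 hw, mem_wordsF.2 rfl⟩)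
  have : ¬ (cluster d k ω {([] : Vert d)} ⊆ {w : Vert d | w.length < n}) := by
    intro hsub
    exact hinf (Set.Finite.subset hfin hsub)
  obtain ⟨w, hw, hwn⟩ := Set.not_subset.1 this
  obtain ⟨v, hv, hr⟩ := hw
  rw [Set.mem_singleton_iff] at hv
  subst hv
  obtain ⟨L, hval, hflat, hop⟩ := chain_of_reach hr
  simp only [List.nil_append] at hflat
  obtain ⟨u, hu, hu1, hu2⟩ := window (by omega) n L ([] : Vert d) hval hop
    (by simp; omega) (by simp only [Set.mem_setOf_eq, not_lt] at hwn; simp [← hflat]; omega)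
  exact ⟨u, hu1, hu2, hu⟩

/-! ### No percolation in the subcritical regime -/

lemma reach_event_subset {w : Vert d} (hk : 2 ≤ k) :
    {ω : Config d | Relation.ReflTransGen (step d k ω) ([] : Vert d) w} ⊆
      ⋃ σ ∈ shapesF k w.length, {ω : Config d | sat ω (consC k ([] : Vert d) w σ)} := by
  intro ω hω
  obtain ⟨L, hval, hflat, hgood⟩ := exists_goodChain hk hω
  obtain ⟨σ, hsize, hsat⟩ := sat_of_goodChain hk L ([] : Vert d) hval hgood
  rw [← hflat] at hsize hsat
  exact Set.mem_iUnion.2 ⟨σ, Set.mem_iUnion.2 ⟨(mem_shapesF (by omega)).2 hsize, hsat⟩⟩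

lemma no_percolation (hd : 2 ≤ d) (hk : 2 ≤ k) {p q : ℝ} (μ : Measure (Config d))
    (hμ : IsPercolation d k p q μ)
    (hp0 : 0 < p) (hpd : p < 1 / d) (hq0 : 0 ≤ q) (hq1 : q ≤ 1)
    (hsub : d * p + d ^ k * (q * (1 - p ^ k)) < 1) :
    μ {ω : Config d | (cluster d k ω {([] : Vert d)}).Infinite} = 0 := by
  classical
  obtain ⟨hprob, hind, hshort, hlong⟩ := hμ
  haveI := hprob
  have hd0 : (0 : ℝ) < d := by
    have : (2 : ℝ) ≤ d := by exact_mod_cast hd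
    linarith
  have hp1 : p < 1 := by
    have h2 : (1 : ℝ) / d ≤ 1 := by
      rw [div_le_one hd0]
      have : (2 : ℝ) ≤ d := by exact_mod_cast hd
      linarith
    linarith
  have hpk1 : 0 ≤ 1 - p ^ k := by
    have := pow_le_one₀ hp0.le hp1.le (n := k)
    linarith
  -- abbreviations
  set A : ℝ := d * p with hA
  set B : ℝ := d ^ k * (q * (1 - p ^ k)) with hB
  have hA0 : 0 ≤ A := mul_nonneg hd0.le hp0.le
  have hB0 : 0 ≤ B := mul_nonneg (pow_nonneg hd0.le _) (mul_nonneg hq0 hpk1)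
  have hAB : A + B < 1 := hsub
  set δ : ℝ := (1 - (A + B)) / k with hδ
  have hk0 : (0 : ℝ) < k := by
    have : (2 : ℝ) ≤ k := by exact_mod_cast hk
    linarith
  have hδ0 : 0 < δ := div_pos (by linarith) hk0
  have hδhalf : δ ≤ 1 / 2 := by
    rw [hδ, div_le_iff₀ hk0]
    have : (2 : ℝ) ≤ k := by exact_mod_cast hk
    nlinarith
  set θ : ℝ := 1 - δ with hθ
  have hθ0 : 0 ≤ θ := by rw [hθ]; linarith
  have hθ1 : θ < 1 := by rw [hθ]; linarith
  have hBern : 1 - (k : ℝ) * δ ≤ θ ^ k := by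
    have h := one_add_mul_le_pow (a := -δ) (by linarith) k
    simpa [hθ, sub_eq_add_neg, mul_comm] using h
  have hkδ : (k : ℝ) * δ = 1 - (A + B) := by
    rw [hδ, mul_div_cancel₀]
    exact ne_of_gt hk0
  have hkey : A * θ ^ (k - 1) + B ≤ θ ^ k := by
    have h1 : A * θ ^ (k - 1) ≤ A := by
      have := pow_le_one₀ hθ0 hθ1.le (n := k - 1)
      nlinarith
    have h2 : A + B ≤ θ ^ k := by
      have : 1 - (k : ℝ) * δ = A + B := by rw [hkδ]; ring
      linarith
    linarith
  set τ : ℝ := θ / d with hτ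
  have hτ0 : 0 ≤ τ := div_nonneg hθ0 hd0.le
  have hAθ : A ≤ θ := by
    have h5 : δ ≤ 1 - (A + B) := by
      rw [hδ]
      refine div_le_self (by linarith) ?_
      have : (2 : ℝ) ≤ k := by exact_mod_cast hk
      linarith
    rw [hθ]
    linarith
  have hpτ : p ≤ τ := by
    rw [hτ, le_div_iff₀ hd0]
    rw [mul_comm]
    exact hAθ
  have hdτ : (d : ℝ) * τ = θ := by
    rw [hτ, mul_div_cancel₀]
    exact ne_of_gt hd0
  obtain ⟨e, he⟩ : ∃ e, k = e + 1 := ⟨k - 1, by omega⟩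
  have hmain : p * τ ^ (k - 1) + q * (1 - p ^ k) ≤ τ ^ k := by
    have hcancel : ∀ x : ℝ, (x / d) ^ e * (d : ℝ) ^ (e + 1) = x ^ e * d := by
      intro x
      rw [div_pow, pow_succ]
      field_simp
    have hde1 : (0 : ℝ) < (d : ℝ) ^ (e + 1) := pow_pos hd0 _
    have step1 : (p * τ ^ (k - 1) + q * (1 - p ^ k)) * (d : ℝ) ^ (e + 1) ≤
        τ ^ k * (d : ℝ) ^ (e + 1) := by
      have he1 : k - 1 = e := by omega
      have hLHS : (p * τ ^ (k - 1) + q * (1 - p ^ k)) * (d : ℝ) ^ (e + 1) =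
          A * θ ^ (k - 1) + B := by
        rw [he1, hτ, add_mul]
        rw [show p * (θ / d) ^ e * (d : ℝ) ^ (e + 1) = p * ((θ / d) ^ e * (d : ℝ) ^ (e + 1)) by ring]
        rw [hcancel θ, hA, hB, he]
        ring
      have hRHS : τ ^ k * (d : ℝ) ^ (e + 1) = θ ^ k := by
        rw [he, hτ, div_pow]
        field_simp
      rw [hLHS, hRHS]
      exact hkey
    exact le_of_mul_le_mul_right step1 hde1
  -- the main estimate
  set E : Set (Config d) := {ω : Config d | (cluster d k ω {([] : Vert d)}).Infinite} with hE
  have key : ∀ n : ℕ, μ E ≤ ENNReal.ofReal ((k : ℝ) * θ ^ n) := by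
    intro n
    have hincl : E ⊆ ⋃ m ∈ Finset.Ico n (n + k), ⋃ w ∈ wordsF d m,
        {ω : Config d | Relation.ReflTransGen (step d k ω) ([] : Vert d) w} := by
      intro ω hω
      obtain ⟨u, h1, h2, h3⟩ := exists_window_vertex hk n hω
      exact Set.mem_iUnion.2 ⟨u.length, Set.mem_iUnion.2 ⟨Finset.mem_Ico.2 ⟨h1, h2⟩,
        Set.mem_iUnion.2 ⟨u, Set.mem_iUnion.2 ⟨mem_wordsF.2 rfl, h3⟩⟩⟩⟩
    have hw_bound : ∀ m, ∀ w ∈ wordsF d m,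
        μ {ω : Config d | Relation.ReflTransGen (step d k ω) ([] : Vert d) w} ≤
          ENNReal.ofReal (τ ^ m) := by
      intro m w hw
      have hwl : w.length = m := mem_wordsF.1 hw
      calc μ {ω : Config d | Relation.ReflTransGen (step d k ω) ([] : Vert d) w}
          ≤ μ (⋃ σ ∈ shapesF k w.length, {ω : Config d | sat ω (consC k ([] : Vert d) w σ)}) :=
            measure_mono (reach_event_subset hk)
        _ ≤ ∑ σ ∈ shapesF k w.length, μ {ω : Config d | sat ω (consC k ([] : Vert d) w σ)} :=
            measure_biUnion_finset_le _ _
        _ = ∑ σ ∈ shapesF k w.length, ENNReal.ofReal (wWeight p q σ) := by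
            refine Finset.sum_congr rfl ?_
            intro σ hσ
            have hsize : sizeS k σ = w.length := (mem_shapesF (by omega)).1 hσ
            rw [meas_sat hind _ (consC_nodup_fst hk σ ([] : Vert d) w hsize),
              prod_consC hshort hlong hp0.le hp1.le hq0 σ ([] : Vert d) w hsize]
        _ = ENNReal.ofReal (∑ σ ∈ shapesF k w.length, wWeight p q σ) :=
            (ENNReal.ofReal_sum_of_nonneg fun σ _ =>
              wWeight_nonneg hp0.le hp1.le hq0 σ).symm
        _ ≤ ENNReal.ofReal (τ ^ m) := by
            rw [← hwl] at *
            exact ENNReal.ofReal_le_ofReal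
              (by rw [hwl]; exact hwl ▸ sum_shapesF_le hk hp0.le hp1.le hq0 hτ0 hpτ hmain w.length)
    calc μ E ≤ ∑ m ∈ Finset.Ico n (n + k), ∑ w ∈ wordsF d m,
          μ {ω : Config d | Relation.ReflTransGen (step d k ω) ([] : Vert d) w} := by
          refine (measure_mono hincl).trans ?_
          refine (measure_biUnion_finset_le _ _).trans ?_
          exact Finset.sum_le_sum fun m _ => measure_biUnion_finset_le _ _
      _ ≤ ∑ m ∈ Finset.Ico n (n + k), ENNReal.ofReal (θ ^ n) := by
          refine Finset.sum_le_sum ?_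
          intro m hm
          obtain ⟨hn, hm2⟩ := Finset.mem_Ico.1 hm
          calc (∑ w ∈ wordsF d m, μ {ω : Config d |
                Relation.ReflTransGen (step d k ω) ([] : Vert d) w})
              ≤ ∑ _w ∈ wordsF d m, ENNReal.ofReal (τ ^ m) :=
                Finset.sum_le_sum fun w hw => hw_bound m w hw
            _ = (wordsF d m).card • ENNReal.ofReal (τ ^ m) := by rw [Finset.sum_const]
            _ ≤ (d ^ m : ℕ) * ENNReal.ofReal (τ ^ m) := by
                rw [nsmul_eq_mul]
                exact mul_le_mul_left (by exact_mod_cast Nat.cast_le.2 (card_wordsF m)) _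
            _ = ENNReal.ofReal ((d : ℝ) ^ m * τ ^ m) := by
                rw [ENNReal.ofReal_mul (by positivity)]
                congr 1
                rw [← ENNReal.ofReal_natCast]
                congr 1
                push_cast
                ring
            _ = ENNReal.ofReal (θ ^ m) := by rw [← mul_pow, hdτ]
            _ ≤ ENNReal.ofReal (θ ^ n) :=
                ENNReal.ofReal_le_ofReal (pow_le_pow_of_le_one hθ0 hθ1.le hn)
      _ = (Finset.Ico n (n + k)).card • ENNReal.ofReal (θ ^ n) := by rw [Finset.sum_const]
      _ = ENNReal.ofReal ((k : ℝ) * θ ^ n) := by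
          rw [Nat.card_Ico, Nat.add_sub_cancel_left, nsmul_eq_mul,
            ENNReal.ofReal_mul (by positivity), ENNReal.ofReal_natCast]
  have hlim : Tendsto (fun n : ℕ => ENNReal.ofReal ((k : ℝ) * θ ^ n)) atTop (nhds 0) := by
    have h1 : Tendsto (fun n : ℕ => (k : ℝ) * θ ^ n) atTop (nhds 0) := by
      have := (tendsto_pow_atTop_nhds_zero_of_lt_one hθ0 hθ1).const_mul (k : ℝ)
      simpa using this
    have h2 := (ENNReal.continuous_ofReal.tendsto 0).comp h1
    rw [ENNReal.ofReal_zero] at h2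
    exact h2
  have : μ E ≤ 0 := ge_of_tendsto' hlim key
  exact le_antisymm this zero_le

/-- percolation occurs at `q = 1`. -/
lemma perc_pos_at_one (hd : 2 ≤ d) (hk : 2 ≤ k) {p : ℝ} (μ : Measure (Config d))
    (hμ : IsPercolation d k p 1 μ) :
    0 < μ {ω : Config d | (cluster d k ω {([] : Vert d)}).Infinite} := by
  classical
  obtain ⟨hprob, hind, hshort, hlong⟩ := hμ
  haveI := hprob
  have hd0 : 0 < d := by omega
  set z : Fin d := ⟨0, hd0⟩ with hz
  set e : ℕ → Vert d × List (Fin d) :=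
    fun j => (List.replicate (j * k) z, List.replicate k z) with he
  have hlen : ∀ j, (e j).2.length = k := fun j => List.length_replicate
  have hEj : ∀ j, μ {ω : Config d | ω (e j) = true} = 1 := by
    intro j
    have := hlong (e j).1 (e j).2 (hlen j)
    rw [← ENNReal.ofReal_toReal (measure_ne_top μ _), this, ENNReal.ofReal_one]
  set F : Set (Config d) := ⋂ j : ℕ, {ω : Config d | ω (e j) = true} with hF
  have hFc : μ Fᶜ = 0 := by
    rw [hF, Set.compl_iInter]
    refine measure_iUnion_null ?_
    intro j
    have h1 : {ω : Config d | ω (e j) = true}ᶜ = {ω : Config d | ω (e j) = false} := by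
      ext ω; cases h : ω (e j) <;> simp [h]
    rw [h1]
    have h2 : {ω : Config d | ω (e j) = false} = {ω : Config d | ω (e j) = true}ᶜ := by
      ext ω; cases h : ω (e j) <;> simp [h]
    rw [h2, measure_compl (coord_meas _ _) (measure_ne_top μ _), hEj j, measure_univ,
      tsub_self]
  have hFE : F ⊆ {ω : Config d | (cluster d k ω {([] : Vert d)}).Infinite} := by
    intro ω hω
    have hreach : ∀ j : ℕ, Relation.ReflTransGen (step d k ω)
        ([] : Vert d) (List.replicate (j * k) z) := by
      intro j
      induction j with
      | zero => simp [Relation.ReflTransGen.refl]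
      | succ j ih =>
          refine Relation.ReflTransGen.tail ih ?_
          refine ⟨List.replicate k z, Or.inr (List.length_replicate), ?_, ?_⟩
          · rw [← List.replicate_add]
            congr 1
            ring
          · exact Set.mem_iInter.1 hω j
    refine Set.infinite_of_injective_forall_mem
      (f := fun j : ℕ => List.replicate (j * k) z) ?_ ?_
    · intro a b hab
      have := congrArg List.length hab
      simp only [List.length_replicate] at this
      have hk0 : 0 < k := by omega
      exact Nat.eq_of_mul_eq_mul_right hk0 this
    · intro j
      exact ⟨([] : Vert d), Set.mem_singleton _, hreach j⟩
  by_contra hcon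
  push_neg at hcon
  have hE0 : μ {ω : Config d | (cluster d k ω {([] : Vert d)}).Infinite} = 0 :=
    le_antisymm hcon zero_le
  have huniv : (Set.univ : Set (Config d)) ⊆
      {ω : Config d | (cluster d k ω {([] : Vert d)}).Infinite} ∪ Fᶜ := by
    intro ω _
    by_cases hωF : ω ∈ F
    · exact Or.inl (hFE hωF)
    · exact Or.inr hωF
  have : (1 : ℝ≥0∞) ≤ 0 := by
    calc (1 : ℝ≥0∞) = μ Set.univ := (measure_univ).symm
      _ ≤ μ ({ω : Config d | (cluster d k ω {([] : Vert d)}).Infinite} ∪ Fᶜ) :=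
          measure_mono huniv
      _ ≤ μ {ω : Config d | (cluster d k ω {([] : Vert d)}).Infinite} + μ Fᶜ :=
          measure_union_le _ _
      _ = 0 := by rw [hE0, hFc, add_zero]
  simp at this

end Perco

/-- **Theorem 1** (de Lima–Szabó–Valesin): for every `p ∈ (0, 1/d)`,
`q_c(p) > (1 - dp)/d^k`. -/
theorem critical_curve_strict (d k : ℕ) (hd : 2 ≤ d) (hk : 2 ≤ k)
    (μ : ℝ → ℝ → Measure (Config d))
    (hμ : ∀ p q : ℝ, p ∈ Set.Icc (0 : ℝ) 1 → q ∈ Set.Icc (0 : ℝ) 1 →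
      IsPercolation d k p q (μ p q))
    (p : ℝ) (hp : p ∈ Set.Ioo (0 : ℝ) (1 / d)) :
    (1 - d * p) / (d : ℝ) ^ k < qc d k μ p := by
  classical
  obtain ⟨hp0, hpd⟩ := hp
  have hd0 : (0 : ℝ) < d := by
    have : (2 : ℝ) ≤ d := by exact_mod_cast hd
    linarith
  have hdk0 : (0 : ℝ) < (d : ℝ) ^ k := pow_pos hd0 k
  have hp1 : p < 1 := by
    have h2 : (1 : ℝ) / d ≤ 1 := by
      rw [div_le_one hd0]
      have : (2 : ℝ) ≤ d := by exact_mod_cast hd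
      linarith
    linarith
  have hpk0 : 0 < p ^ k := pow_pos hp0 k
  have hpk1 : p ^ k < 1 := pow_lt_one₀ hp0.le hp1 (by omega)
  have hdp1 : d * p < 1 := by
    rw [mul_comm]
    exact (lt_div_iff₀ hd0).1 hpd
  have hX : 0 < (d : ℝ) ^ k * (1 - p ^ k) := mul_pos hdk0 (by linarith)
  set qbar : ℝ := (1 - d * p) / ((d : ℝ) ^ k * (1 - p ^ k)) with hqbar
  set S : Set ℝ := {q | q ∈ Set.Icc (0 : ℝ) 1 ∧
    0 < μ p q {ω | (cluster d k ω {([] : Vert d)}).Infinite}} with hS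
  have hqceq : qc d k μ p = sInf S := rfl
  have hpIcc : p ∈ Set.Icc (0 : ℝ) 1 := ⟨hp0.le, by linarith⟩
  have h1Icc : (1 : ℝ) ∈ Set.Icc (0 : ℝ) 1 := ⟨zero_le_one, le_refl 1⟩
  have hne : S.Nonempty :=
    ⟨1, h1Icc, Perco.perc_pos_at_one hd hk (μ p 1) (hμ p 1 hpIcc h1Icc)⟩
  have hlb : ∀ r ∈ S, qbar ≤ r := by
    intro r hr
    obtain ⟨⟨hr0, hr1⟩, hpos⟩ := hr
    by_contra hlt
    push_neg at hlt
    have hsub : d * p + d ^ k * (r * (1 - p ^ k)) < 1 := by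
      have h1 : r * ((d : ℝ) ^ k * (1 - p ^ k)) < qbar * ((d : ℝ) ^ k * (1 - p ^ k)) :=
        mul_lt_mul_of_pos_right hlt hX
      have h2 : qbar * ((d : ℝ) ^ k * (1 - p ^ k)) = 1 - d * p :=
        div_mul_cancel₀ _ (ne_of_gt hX)
      nlinarith [h1, h2]
    have h0 := Perco.no_percolation hd hk (μ p r) (hμ p r hpIcc ⟨hr0, hr1⟩)
      hp0 hpd hr0 hr1 hsub
    rw [h0] at hpos
    exact lt_irrefl _ hpos
  have hge : qbar ≤ qc d k μ p := by
    rw [hqceq]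
    exact le_csInf hne hlb
  have hlt2 : (1 - d * p) / (d : ℝ) ^ k < qbar := by
    rw [hqbar]
    refine div_lt_div_of_pos_left (by linarith) hX ?_
    nlinarith [hdk0, hpk0]
  linarith
end

section
/- Let Z be a multi-type branching process with type set 𝒯 and offspring distribution p, let I ⊊ 𝒯 be a strict subset of the types, and let X be the multi-type branching process with the same type set 𝒯 and offspring distribution p̃, where p̃(a,·) is the law of the population obtained by sampling χ ~ p(a,·), keeping unaltered all individuals of χ whose type is not in I, and replacing each individual of χ of each type b ∈ I by an independent population sampled from p(b,·). Then for every η ∈ ℕ₀^𝒯, P(Z survives | Z_0 = η) = P(X survives | X_0 = η). -/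
open scoped ENNReal

section MTBP

variable {T : Type*} [Fintype T] [DecidableEq T]

/-- Convolution (law of an independent sum) of two population distributions. -/
noncomputable def addPMF (μ ν : PMF (T → ℕ)) : PMF (T → ℕ) :=
  μ.bind fun x => ν.map fun y => x + y

/-- Law of the sum of `n` i.i.d. populations with common law `μ`. -/
noncomputable def iidSum (μ : PMF (T → ℕ)) : ℕ → PMF (T → ℕ)
  | 0 => PMF.pure 0
  | n + 1 => addPMF μ (iidSum μ n)

/-- One generation of the multi-type branching process with offspring
distribution `p`: each of the `η a` individuals of each type `a` is replaced,
independently, by a population sampled from `p a`. -/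
noncomputable def branchStep (p : T → PMF (T → ℕ)) (η : T → ℕ) : PMF (T → ℕ) :=
  (Finset.univ : Finset T).toList.foldr
    (fun a acc => addPMF (iidSum (p a) (η a)) acc) (PMF.pure 0)

/-- The law of generation `n` of the multi-type branching process with offspring
distribution `p` started from the deterministic population `η`. -/
noncomputable def gen (p : T → PMF (T → ℕ)) (η : T → ℕ) : ℕ → PMF (T → ℕ)
  | 0 => PMF.pure η
  | n + 1 => (gen p η n).bind (branchStep p)

/-- The extinction probability of the multi-type branching process started from `η`.
Since `0` is absorbing, the events `{Z_n = 0}` increase, and the probability of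
extinction equals `⨆ n, P(Z_n = 0)`. -/
noncomputable def extinctionProb (p : T → PMF (T → ℕ)) (η : T → ℕ) : ℝ≥0∞ :=
  ⨆ n : ℕ, gen p η n 0

/-- The survival probability `P(Z survives ∣ Z_0 = η)`. -/
noncomputable def survivalProb (p : T → PMF (T → ℕ)) (η : T → ℕ) : ℝ≥0∞ :=
  1 - extinctionProb p η

/-- `e_a`, the population consisting of a single individual of type `a`. -/
def single (a : T) : T → ℕ := fun b => if b = a then 1 else 0

end MTBP

section Stmt5

variable {T : Type*} [Fintype T] [DecidableEq T]

/-- The independent sum of populations sampled from `f a`, for `a` ranging over `l`. -/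
noncomputable def sumAlong (l : List T) (f : T → PMF (T → ℕ)) : PMF (T → ℕ) :=
  l.foldr (fun a acc => addPMF (f a) acc) (PMF.pure 0)

/-- The offspring distribution `p̃` of the comparison process `X` of
Lemma 3.1 (de Lima–Szabó–Valesin): sample `χ ~ p(a,·)`, keep all individuals of `χ`
whose type is not in `I`, and replace each individual of `χ` of each type `b ∈ I`
by an independent population sampled from `p(b,·)`. -/
noncomputable def collapsedOffspring (p : T → PMF (T → ℕ)) (I : Set T)
    [DecidablePred (· ∈ I)] (a : T) : PMF (T → ℕ) :=
  (p a).bind fun χ =>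
    addPMF (PMF.pure fun b => if b ∈ I then 0 else χ b)
      (sumAlong ((Finset.univ.filter (· ∈ I)).toList) (fun b => iidSum (p b) (χ b)))

namespace MTBPaux

set_option linter.unusedSectionVars false

variable {T : Type*} [Fintype T] [DecidableEq T]

/-- Expectation of a nonnegative functional under a PMF. -/
noncomputable def Ex (μ : PMF (T → ℕ)) (f : (T → ℕ) → ℝ≥0∞) : ℝ≥0∞ := ∑' ξ, μ ξ * f ξ

/-- The multiplicative functional `ξ ↦ ∏ b, s b ^ ξ b`. -/
noncomputable def mfun (s : T → ℝ≥0∞) (ξ : T → ℕ) : ℝ≥0∞ := ∏ b, s b ^ ξ b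

/-- The generating-function map of the offspring distribution `p`. -/
noncomputable def Fg (p : T → PMF (T → ℕ)) (s : T → ℝ≥0∞) : T → ℝ≥0∞ :=
  fun a => Ex (p a) (mfun s)

lemma Ex_pure (η : T → ℕ) (f : (T → ℕ) → ℝ≥0∞) : Ex (PMF.pure η) f = f η := by
  unfold Ex
  rw [tsum_eq_single η]
  · simp
  · intro ξ h; simp [PMF.pure_apply, h]

lemma Ex_bind (μ : PMF (T → ℕ)) (κ : (T → ℕ) → PMF (T → ℕ)) (f : (T → ℕ) → ℝ≥0∞) :
    Ex (μ.bind κ) f = ∑' a, μ a * Ex (κ a) f := by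
  unfold Ex
  simp only [PMF.bind_apply]
  calc ∑' ξ, (∑' a, μ a * κ a ξ) * f ξ
      = ∑' ξ, ∑' a, μ a * κ a ξ * f ξ := by
        refine tsum_congr fun ξ => ?_
        rw [← ENNReal.tsum_mul_right]
    _ = ∑' a, ∑' ξ, μ a * κ a ξ * f ξ := ENNReal.tsum_comm
    _ = ∑' a, μ a * ∑' ξ, κ a ξ * f ξ := by
        refine tsum_congr fun a => ?_
        simp_rw [mul_assoc]
        rw [ENNReal.tsum_mul_left]

lemma Ex_map (μ : PMF (T → ℕ)) (g : (T → ℕ) → (T → ℕ)) (f : (T → ℕ) → ℝ≥0∞) :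
    Ex (μ.map g) f = Ex μ (fun x => f (g x)) := by
  rw [PMF.map, Ex_bind]
  simp only [Function.comp, Ex_pure]
  rfl

lemma mfun_add (s : T → ℝ≥0∞) (x y : T → ℕ) :
    mfun s (x + y) = mfun s x * mfun s y := by
  simp [mfun, pow_add, Finset.prod_mul_distrib]

lemma mfun_zero_arg (s : T → ℝ≥0∞) : mfun s 0 = 1 := by
  simp [mfun]

lemma Ex_addPMF (μ ν : PMF (T → ℕ)) (s : T → ℝ≥0∞) :
    Ex (addPMF μ ν) (mfun s) = Ex μ (mfun s) * Ex ν (mfun s) := by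
  unfold addPMF
  rw [Ex_bind]
  have h : ∀ x : T → ℕ, Ex (ν.map fun y => x + y) (mfun s) = mfun s x * Ex ν (mfun s) := by
    intro x
    rw [Ex_map]
    unfold Ex
    simp_rw [mfun_add, mul_left_comm (ν _)]
    rw [ENNReal.tsum_mul_left]
  simp_rw [h, ← mul_assoc]
  rw [ENNReal.tsum_mul_right]
  rfl

lemma Ex_iidSum (μ : PMF (T → ℕ)) (n : ℕ) (s : T → ℝ≥0∞) :
    Ex (iidSum μ n) (mfun s) = (Ex μ (mfun s)) ^ n := by
  induction n with
  | zero => simp [iidSum, Ex_pure, mfun_zero_arg]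
  | succ n ih => rw [iidSum, Ex_addPMF, ih, pow_succ, mul_comm]

lemma Ex_sumAlong (l : List T) (f : T → PMF (T → ℕ)) (s : T → ℝ≥0∞) :
    Ex (sumAlong l f) (mfun s) = (l.map (fun a => Ex (f a) (mfun s))).prod := by
  induction l with
  | nil => simp [sumAlong, Ex_pure, mfun_zero_arg]
  | cons a l ih =>
    rw [show sumAlong (a :: l) f = addPMF (f a) (sumAlong l f) from rfl, Ex_addPMF, ih]
    simp

lemma Ex_branchStep (p : T → PMF (T → ℕ)) (η : T → ℕ) (s : T → ℝ≥0∞) :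
    Ex (branchStep p η) (mfun s) = mfun (Fg p s) η := by
  have : branchStep p η = sumAlong (Finset.univ : Finset T).toList
      (fun a => iidSum (p a) (η a)) := rfl
  rw [this, Ex_sumAlong]
  simp_rw [Ex_iidSum]
  rw [Finset.prod_map_toList]
  rfl

lemma Ex_gen (p : T → PMF (T → ℕ)) (η : T → ℕ) (n : ℕ) (s : T → ℝ≥0∞) :
    Ex (gen p η n) (mfun s) = mfun ((Fg p)^[n] s) η := by
  induction n generalizing s with
  | zero => simp [gen, Ex_pure]
  | succ n ih =>
    rw [show gen p η (n + 1) = (gen p η n).bind (branchStep p) from rfl, Ex_bind]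
    simp_rw [Ex_branchStep]
    rw [show (∑' ξ, gen p η n ξ * mfun (Fg p s) ξ) = Ex (gen p η n) (mfun (Fg p s)) from rfl,
      ih, Function.iterate_succ_apply]

lemma mfun_zero (ξ : T → ℕ) : mfun (0 : T → ℝ≥0∞) ξ = if ξ = 0 then 1 else 0 := by
  by_cases h : ξ = 0
  · simp [h, mfun]
  · rw [if_neg h]
    obtain ⟨b, hb⟩ := Function.ne_iff.mp h
    exact Finset.prod_eq_zero (Finset.mem_univ b) (zero_pow hb)

lemma Ex_mfun_zero (μ : PMF (T → ℕ)) : Ex μ (mfun (0 : T → ℝ≥0∞)) = μ 0 := by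
  unfold Ex
  rw [tsum_eq_single 0]
  · simp [mfun_zero]
  · intro ξ h; simp [mfun_zero, h]

lemma gen_apply_zero (p : T → PMF (T → ℕ)) (η : T → ℕ) (n : ℕ) :
    gen p η n 0 = mfun ((Fg p)^[n] 0) η := by
  rw [← Ex_gen, Ex_mfun_zero]

lemma mfun_mono {s t : T → ℝ≥0∞} (h : s ≤ t) (ξ : T → ℕ) : mfun s ξ ≤ mfun t ξ :=
  Finset.prod_le_prod' fun b _ => pow_le_pow_left₀ zero_le (h b) _

lemma Ex_mono (μ : PMF (T → ℕ)) {f g : (T → ℕ) → ℝ≥0∞} (h : ∀ ξ, f ξ ≤ g ξ) :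
    Ex μ f ≤ Ex μ g :=
  ENNReal.tsum_le_tsum fun ξ => mul_le_mul_right (h ξ) _

lemma Fg_mono (p : T → PMF (T → ℕ)) {s t : T → ℝ≥0∞} (h : s ≤ t) : Fg p s ≤ Fg p t :=
  fun a => Ex_mono (p a) (mfun_mono h)

/-- Monotonicity of the iterates `Fⁿ(0)`. -/
lemma iter_mono (p : T → PMF (T → ℕ)) : Monotone (fun n => (Fg p)^[n] (0 : T → ℝ≥0∞)) := by
  refine monotone_nat_of_le_succ fun n => ?_
  induction n with
  | zero => exact fun a => zero_le
  | succ n ih =>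
    rw [Function.iterate_succ_apply', Function.iterate_succ_apply']
    exact Fg_mono p ih

/-- The collapsed generating function: `F̃ = F ∘ G`. -/
lemma Fg_collapsed (p : T → PMF (T → ℕ)) (I : Set T) [DecidablePred (· ∈ I)]
    (s : T → ℝ≥0∞) :
    Fg (collapsedOffspring p I) s = Fg p (fun b => if b ∈ I then Fg p s b else s b) := by
  funext a
  show Ex ((p a).bind _) (mfun s) = Ex (p a) (mfun _)
  rw [Ex_bind]
  refine tsum_congr fun χ => ?_
  congr 1
  rw [Ex_addPMF, Ex_pure, Ex_sumAlong]
  simp_rw [Ex_iidSum]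
  rw [Finset.prod_map_toList, Finset.prod_filter]
  unfold mfun
  rw [← Finset.prod_mul_distrib]
  refine Finset.prod_congr rfl fun b _ => ?_
  by_cases hb : b ∈ I <;> simp [hb, Fg] <;> rfl

/-- Sandwich: `Fⁿ(0) ≤ F̃ⁿ(0) ≤ F²ⁿ(0)`. -/
lemma sandwich (p : T → PMF (T → ℕ)) (I : Set T) [DecidablePred (· ∈ I)] (n : ℕ) :
    (Fg p)^[n] 0 ≤ (Fg (collapsedOffspring p I))^[n] 0 ∧
      (Fg (collapsedOffspring p I))^[n] 0 ≤ (Fg p)^[2 * n] 0 := by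
  induction n with
  | zero => exact ⟨le_rfl, le_rfl⟩
  | succ n ih =>
    obtain ⟨h1, h2⟩ := ih
    constructor
    · rw [Function.iterate_succ_apply', Function.iterate_succ_apply', Fg_collapsed]
      refine Fg_mono p fun b => ?_
      by_cases hb : b ∈ I
      · simp only [hb, if_true]
        calc (Fg p)^[n] 0 b ≤ (Fg p)^[n + 1] 0 b := iter_mono p (Nat.le_succ n) b
          _ = Fg p ((Fg p)^[n] 0) b := by rw [Function.iterate_succ_apply']
          _ ≤ Fg p ((Fg (collapsedOffspring p I))^[n] 0) b := Fg_mono p h1 b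
      · simpa [hb] using h1 b
    · rw [show 2 * (n + 1) = (2 * n + 1) + 1 by ring,
        Function.iterate_succ_apply', Function.iterate_succ_apply', Fg_collapsed]
      refine Fg_mono p fun b => ?_
      by_cases hb : b ∈ I
      · simp only [hb, if_true]
        calc Fg p ((Fg (collapsedOffspring p I))^[n] 0) b
            ≤ Fg p ((Fg p)^[2 * n] 0) b := Fg_mono p h2 b
          _ = (Fg p)^[2 * n + 1] 0 b := by rw [Function.iterate_succ_apply']
      · simp only [hb, if_false]
        exact le_trans (h2 b) (iter_mono p (Nat.le_succ (2 * n)) b)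

end MTBPaux


/-- **Lemma 3.1** (de Lima–Szabó–Valesin): the processes `Z` (offspring distribution `p`)
and `X` (offspring distribution `p̃`) have the same survival probability from any
initial population `η`. -/
theorem survival_collapsed (p : T → PMF (T → ℕ)) (I : Set T) [DecidablePred (· ∈ I)]
    (hI : I ⊂ Set.univ) (η : T → ℕ) :
    survivalProb p η = survivalProb (collapsedOffspring p I) η := by
  have key : extinctionProb p η = extinctionProb (collapsedOffspring p I) η := by
    unfold extinctionProb
    simp_rw [MTBPaux.gen_apply_zero]
    apply le_antisymm
    · exact iSup_mono fun n => MTBPaux.mfun_mono (MTBPaux.sandwich p I n).1 η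
    · refine iSup_le fun n => ?_
      exact le_trans (MTBPaux.mfun_mono (MTBPaux.sandwich p I n).2 η)
        (le_iSup (fun k => MTBPaux.mfun ((MTBPaux.Fg p)^[k] 0) η) (2 * n))
  unfold survivalProb
  rw [key]

end Stmt5
end

section
/- Let Z be a multi-type branching process with type set 𝒯 and offspring distribution p, let a⋆ ∈ 𝒯 be a distinguished type, and let λ : 𝒯 → ℕ satisfy λ(a⋆) = 1 and P(Z survives | Z_0 = e_a) ≤ P(Z survives | Z_0 = λ(a)·e_{a⋆}) for all a ∈ 𝒯. Let (Y_n)_{n≥0} be the single-type branching process with Y_0 = 1 and offspring distribution equal to the law of Σ_{a∈𝒯} λ(a)·χ(a), where χ ~ p(a⋆,·). If (Y_n) goes extinct with probability one, then Z started from Z_0 = e_{a⋆} also goes extinct with probability one. -/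
open scoped ENNReal
set_option linter.unusedSectionVars false

section AuxLemmas

variable {T : Type*} [Fintype T] [DecidableEq T]

/-- Expectation of `g` under a `PMF`. -/
noncomputable def pexp {α : Type*} (μ : PMF α) (g : α → ℝ≥0∞) : ℝ≥0∞ := ∑' x, μ x * g x

lemma pexp_pure {α : Type*} (a : α) (g : α → ℝ≥0∞) : pexp (PMF.pure a) g = g a := by
  unfold pexp
  rw [tsum_eq_single a]
  · simp [PMF.pure_apply]
  · intro b hb
    simp [PMF.pure_apply, hb]

lemma pexp_bind {α β : Type*} (μ : PMF α) (f : α → PMF β) (g : β → ℝ≥0∞) :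
    pexp (μ.bind f) g = pexp μ (fun a => pexp (f a) g) := by
  unfold pexp
  simp_rw [PMF.bind_apply]
  calc ∑' b, (∑' a, μ a * (f a) b) * g b
      = ∑' b, ∑' a, μ a * (f a) b * g b := tsum_congr fun b => ENNReal.tsum_mul_right.symm
    _ = ∑' a, ∑' b, μ a * (f a) b * g b := ENNReal.tsum_comm
    _ = ∑' a, μ a * ∑' b, (f a) b * g b := tsum_congr fun a => by
          simp_rw [mul_assoc]; exact ENNReal.tsum_mul_left

lemma pexp_map {α β : Type*} (μ : PMF α) (h : α → β) (g : β → ℝ≥0∞) :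
    pexp (μ.map h) g = pexp μ (fun a => g (h a)) := by
  rw [show μ.map h = μ.bind (fun a => PMF.pure (h a)) from rfl, pexp_bind]
  simp_rw [pexp_pure]

lemma pexp_conv {M : Type*} [Add M] (μ ν : PMF M) (g : M → ℝ≥0∞)
    (hg : ∀ x y, g (x + y) = g x * g y) :
    pexp (μ.bind fun x => ν.map fun y => x + y) g = pexp μ g * pexp ν g := by
  rw [pexp_bind]
  have h1 : ∀ x, pexp (ν.map fun y => x + y) g = g x * pexp ν g := by
    intro x
    rw [pexp_map]
    unfold pexp
    simp_rw [hg]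
    calc ∑' y, ν y * (g x * g y) = ∑' y, g x * (ν y * g y) :=
          tsum_congr fun y => by ring
      _ = g x * ∑' y, ν y * g y := ENNReal.tsum_mul_left
  simp_rw [h1]
  unfold pexp
  calc ∑' x, μ x * (g x * ∑' y, ν y * g y)
      = ∑' x, (μ x * g x) * ∑' y, ν y * g y := tsum_congr fun x => (mul_assoc _ _ _).symm
    _ = (∑' x, μ x * g x) * ∑' y, ν y * g y := ENNReal.tsum_mul_right

lemma pexp_addPMF (μ ν : PMF (T → ℕ)) (g : (T → ℕ) → ℝ≥0∞)
    (hg : ∀ x y, g (x + y) = g x * g y) :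
    pexp (addPMF μ ν) g = pexp μ g * pexp ν g :=
  pexp_conv μ ν g hg

lemma pexp_iidSum (μ : PMF (T → ℕ)) (g : (T → ℕ) → ℝ≥0∞)
    (hg : ∀ x y, g (x + y) = g x * g y) (hg0 : g 0 = 1) (n : ℕ) :
    pexp (iidSum μ n) g = (pexp μ g) ^ n := by
  induction n with
  | zero => simp [iidSum, pexp_pure, hg0]
  | succ n ih => rw [iidSum, pexp_addPMF μ _ g hg, ih, pow_succ, mul_comm]

lemma pexp_foldr (p : T → PMF (T → ℕ)) (η : T → ℕ) (g : (T → ℕ) → ℝ≥0∞)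
    (hg : ∀ x y, g (x + y) = g x * g y) (hg0 : g 0 = 1) (L : List T) :
    pexp (L.foldr (fun a acc => addPMF (iidSum (p a) (η a)) acc) (PMF.pure 0)) g
      = (L.map fun a => (pexp (p a) g) ^ η a).prod := by
  induction L with
  | nil => simp [pexp_pure, hg0]
  | cons a L ih =>
      simp only [List.foldr_cons, List.map_cons, List.prod_cons]
      rw [pexp_addPMF _ _ g hg, pexp_iidSum _ g hg hg0, ih]

lemma pexp_branchStep (p : T → PMF (T → ℕ)) (η : T → ℕ) (g : (T → ℕ) → ℝ≥0∞)
    (hg : ∀ x y, g (x + y) = g x * g y) (hg0 : g 0 = 1) :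
    pexp (branchStep p η) g = ∏ a : T, (pexp (p a) g) ^ η a := by
  rw [branchStep, pexp_foldr p η g hg hg0, Finset.prod_map_toList]

lemma gPow_mul (q : T → ℝ≥0∞) (x y : T → ℕ) :
    ∏ a : T, q a ^ (x + y) a = (∏ a : T, q a ^ x a) * ∏ a : T, q a ^ y a := by
  rw [← Finset.prod_mul_distrib]
  exact Finset.prod_congr rfl fun a _ => by simp [pow_add]

lemma gen_succ' (p : T → PMF (T → ℕ)) : ∀ (n : ℕ) (η : T → ℕ),
    gen p η (n + 1) = (branchStep p η).bind (fun ζ => gen p ζ n) := by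
  intro n
  induction n with
  | zero =>
      intro η
      show (gen p η 0).bind (branchStep p) = _
      rw [show gen p η 0 = PMF.pure η from rfl, PMF.pure_bind]
      exact (PMF.bind_pure _).symm
  | succ n ih =>
      intro η
      show (gen p η (n + 1)).bind (branchStep p) = _
      rw [ih η, PMF.bind_bind]
      rfl

lemma prod_single_pow (f : T → ℝ≥0∞) (a : T) : ∏ b : T, f b ^ (single a b) = f a := by
  have : ∀ b : T, f b ^ (single a b) = if b = a then f b else 1 := by
    intro b
    by_cases h : b = a <;> simp [single, h]
  simp_rw [this]
  simp

lemma gen_zero_prod (p : T → PMF (T → ℕ)) : ∀ (n : ℕ) (η : T → ℕ),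
    gen p η n 0 = ∏ a : T, (gen p (single a) n 0) ^ η a := by
  intro n
  induction n with
  | zero =>
      intro η
      show (PMF.pure η) 0 = ∏ a : T, ((PMF.pure (single a) : PMF (T → ℕ)) 0) ^ η a
      by_cases hη : η = 0
      · subst hη
        simp [PMF.pure_apply]
      · obtain ⟨a, ha⟩ : ∃ a, η a ≠ 0 := by
          by_contra h
          push_neg at h
          exact hη (funext h)
        rw [Finset.prod_eq_zero (Finset.mem_univ a)]
        · have : (0 : T → ℕ) ≠ η := fun h => hη h.symm
          simp [PMF.pure_apply, this]
        · have hs : (0 : T → ℕ) ≠ single a := by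
            intro h
            have := congrFun h a
            simp [single] at this
          rw [PMF.pure_apply, if_neg hs]
          exact zero_pow ha
  | succ n ih =>
      have hg : ∀ x y : T → ℕ,
          (∏ a : T, (gen p (single a) n 0) ^ (x + y) a)
            = (∏ a : T, (gen p (single a) n 0) ^ x a)
              * ∏ a : T, (gen p (single a) n 0) ^ y a :=
        gPow_mul _
      have hg0 : (∏ a : T, (gen p (single a) n 0) ^ (0 : T → ℕ) a) = 1 := by simp
      have hstep : ∀ η : T → ℕ, gen p η (n + 1) 0
          = ∏ a : T, (pexp (p a) (fun ζ => ∏ b : T, (gen p (single b) n 0) ^ ζ b)) ^ η a := by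
        intro η
        rw [gen_succ' p n η, PMF.bind_apply]
        have : (∑' ζ : T → ℕ, (branchStep p η) ζ * gen p ζ n 0)
            = pexp (branchStep p η) (fun ζ => ∏ b : T, (gen p (single b) n 0) ^ ζ b) := by
          unfold pexp
          exact tsum_congr fun ζ => by rw [ih ζ]
        rw [this, pexp_branchStep p η _ hg hg0]
      intro η
      rw [hstep η]
      have hsingle : ∀ a : T, gen p (single a) (n + 1) 0
          = pexp (p a) (fun ζ => ∏ b : T, (gen p (single b) n 0) ^ ζ b) := by
        intro a
        rw [hstep (single a), prod_single_pow]
      exact Finset.prod_congr rfl fun a _ => by rw [hsingle a]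

lemma gen_single_succ (p : T → PMF (T → ℕ)) (a : T) (n : ℕ) :
    gen p (single a) (n + 1) 0
      = pexp (p a) (fun ζ => ∏ b : T, (gen p (single b) n 0) ^ ζ b) := by
  rw [gen_zero_prod p (n + 1) (single a), prod_single_pow]
  have hg : ∀ x y : T → ℕ,
      (∏ b : T, (gen p (single b) n 0) ^ (x + y) b)
        = (∏ b : T, (gen p (single b) n 0) ^ x b)
          * ∏ b : T, (gen p (single b) n 0) ^ y b := gPow_mul _
  have hg0 : (∏ b : T, (gen p (single b) n 0) ^ (0 : T → ℕ) b) = 1 := by simp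
  rw [gen_succ' p n (single a), PMF.bind_apply]
  have : (∑' ζ : T → ℕ, (branchStep p (single a)) ζ * gen p ζ n 0)
      = pexp (branchStep p (single a)) (fun ζ => ∏ b : T, (gen p (single b) n 0) ^ ζ b) := by
    unfold pexp
    exact tsum_congr fun ζ => by rw [gen_zero_prod p n ζ]
  rw [this, pexp_branchStep p _ _ hg hg0, prod_single_pow]

lemma addPMF_pure_zero_left (ν : PMF (T → ℕ)) : addPMF (PMF.pure 0) ν = ν := by
  unfold addPMF
  rw [PMF.pure_bind]
  have : (fun y : T → ℕ => (0 : T → ℕ) + y) = id := funext fun y => zero_add y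
  rw [this, PMF.map_id]

lemma branchStep_zero (p : T → PMF (T → ℕ)) : branchStep p (0 : T → ℕ) = PMF.pure 0 := by
  unfold branchStep
  generalize (Finset.univ : Finset T).toList = L
  induction L with
  | nil => rfl
  | cons a L ih =>
      simp only [List.foldr_cons]
      rw [ih, show iidSum (p a) ((0 : T → ℕ) a) = PMF.pure 0 from rfl,
        addPMF_pure_zero_left]

lemma gen_zero_mono (p : T → PMF (T → ℕ)) (η : T → ℕ) :
    Monotone fun n => gen p η n 0 := by
  apply monotone_nat_of_le_succ
  intro n
  rw [show gen p η (n + 1) = (gen p η n).bind (branchStep p) from rfl, PMF.bind_apply]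
  calc gen p η n 0 = gen p η n 0 * (branchStep p (0 : T → ℕ)) 0 := by
        rw [branchStep_zero]; simp [PMF.pure_apply]
    _ ≤ ∑' ζ : T → ℕ, gen p η n ζ * (branchStep p ζ) 0 :=
        ENNReal.le_tsum 0

/-! Supremum exchange lemmas for monotone sequences in `ℝ≥0∞`. -/

lemma iSup_mul_iSup_mono (f g : ℕ → ℝ≥0∞) (hf : Monotone f) (hg : Monotone g) :
    (⨆ n, f n) * (⨆ n, g n) = ⨆ n, f n * g n := by
  apply le_antisymm
  · rw [ENNReal.iSup_mul]
    refine iSup_le fun i => ?_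
    rw [ENNReal.mul_iSup]
    refine iSup_le fun j => ?_
    exact le_iSup_of_le (max i j)
      (mul_le_mul' (hf (le_max_left i j)) (hg (le_max_right i j)))
  · exact iSup_le fun n => mul_le_mul' (le_iSup f n) (le_iSup g n)

lemma iSup_pow_mono (f : ℕ → ℝ≥0∞) (hf : Monotone f) (k : ℕ) :
    (⨆ n, f n) ^ k = ⨆ n, (f n) ^ k := by
  induction k with
  | zero => simp
  | succ k ih =>
      rw [pow_succ, ih, iSup_mul_iSup_mono _ _ (fun i j h => pow_le_pow_left' (hf h) k) hf]
      simp_rw [pow_succ]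

lemma iSup_prod_mono {ι : Type*} [DecidableEq ι] (s : Finset ι) (u : ℕ → ι → ℝ≥0∞)
    (hu : ∀ a, Monotone (fun n => u n a)) :
    (∏ a ∈ s, ⨆ n, u n a) = ⨆ n, ∏ a ∈ s, u n a := by
  induction s using Finset.induction_on with
  | empty => simp
  | insert _ _ ha ih =>
      rename_i a s
      rw [Finset.prod_insert ha, ih, iSup_mul_iSup_mono _ _ (hu a)
        (fun i j h => Finset.prod_le_prod' fun b _ => hu b h)]
      exact iSup_congr fun n => (Finset.prod_insert ha).symm

lemma tsum_iSup_mono {ι : Type*} (v : ℕ → ι → ℝ≥0∞) (hv : ∀ i, Monotone (fun n => v n i)) :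
    ∑' i, ⨆ n, v n i = ⨆ n, ∑' i, v n i := by
  rw [ENNReal.tsum_eq_iSup_sum]
  have h1 : ∀ s : Finset ι, (∑ i ∈ s, ⨆ n, v n i) = ⨆ n, ∑ i ∈ s, v n i := fun s =>
    ENNReal.finsetSum_iSup_of_monotone fun i => hv i
  simp_rw [h1]
  rw [iSup_comm]
  exact iSup_congr fun n => (ENNReal.tsum_eq_iSup_sum).symm

end AuxLemmas

section Stmt6

variable {T : Type*} [Fintype T] [DecidableEq T]

/-- Convolution of two distributions on `ℕ` (law of an independent sum). -/
noncomputable def addPMFNat (μ ν : PMF ℕ) : PMF ℕ :=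
  μ.bind fun x => ν.map fun y => x + y

/-- Law of the sum of `n` i.i.d. copies of `μ`. -/
noncomputable def iidSumNat (μ : PMF ℕ) : ℕ → PMF ℕ
  | 0 => PMF.pure 0
  | n + 1 => addPMFNat μ (iidSumNat μ n)

/-- The law of generation `n` of a single-type branching process with offspring
distribution `μ`, started from one individual. -/
noncomputable def genNat (μ : PMF ℕ) : ℕ → PMF ℕ
  | 0 => PMF.pure 1
  | n + 1 => (genNat μ n).bind (iidSumNat μ)

/-- Extinction probability of the single-type branching process with offspring
distribution `μ` started from one individual (`0` is absorbing, so this is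
`⨆ n, P(Y_n = 0)`). -/
noncomputable def extinctionProbNat (μ : PMF ℕ) : ℝ≥0∞ :=
  ⨆ n : ℕ, genNat μ n 0

/-! Single-type analogues. -/

noncomputable def genFrom (μ : PMF ℕ) (k : ℕ) : ℕ → PMF ℕ
  | 0 => PMF.pure k
  | n + 1 => (genFrom μ k n).bind (iidSumNat μ)

lemma genNat_eq_genFrom (μ : PMF ℕ) : ∀ n, genNat μ n = genFrom μ 1 n := by
  intro n
  induction n with
  | zero => rfl
  | succ n ih => show (genNat μ n).bind _ = (genFrom μ 1 n).bind _; rw [ih]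

lemma pexp_addPMFNat (μ ν : PMF ℕ) (g : ℕ → ℝ≥0∞)
    (hg : ∀ x y, g (x + y) = g x * g y) :
    pexp (addPMFNat μ ν) g = pexp μ g * pexp ν g :=
  pexp_conv μ ν g hg

lemma pexp_iidSumNat (μ : PMF ℕ) (g : ℕ → ℝ≥0∞)
    (hg : ∀ x y, g (x + y) = g x * g y) (hg0 : g 0 = 1) (n : ℕ) :
    pexp (iidSumNat μ n) g = (pexp μ g) ^ n := by
  induction n with
  | zero => simp [iidSumNat, pexp_pure, hg0]
  | succ n ih => rw [iidSumNat, pexp_addPMFNat μ _ g hg, ih, pow_succ, mul_comm]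

lemma genFrom_succ' (μ : PMF ℕ) : ∀ (n k : ℕ),
    genFrom μ k (n + 1) = (iidSumNat μ k).bind (fun j => genFrom μ j n) := by
  intro n
  induction n with
  | zero =>
      intro k
      show (genFrom μ k 0).bind (iidSumNat μ) = _
      rw [show genFrom μ k 0 = PMF.pure k from rfl, PMF.pure_bind]
      exact (PMF.bind_pure _).symm
  | succ n ih =>
      intro k
      show (genFrom μ k (n + 1)).bind (iidSumNat μ) = _
      rw [ih k, PMF.bind_bind]
      rfl

lemma genFrom_zero_pow (μ : PMF ℕ) : ∀ (n k : ℕ),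
    genFrom μ k n 0 = (genNat μ n 0) ^ k := by
  intro n
  induction n with
  | zero =>
      intro k
      show (PMF.pure k : PMF ℕ) 0 = ((PMF.pure 1 : PMF ℕ) 0) ^ k
      rw [PMF.pure_apply, PMF.pure_apply, if_neg (by norm_num : (0 : ℕ) ≠ 1)]
      cases k with
      | zero => simp
      | succ k => rw [if_neg (Nat.succ_ne_zero k).symm, zero_pow (Nat.succ_ne_zero k)]
  | succ n ih =>
      have hg : ∀ x y : ℕ, (genNat μ n 0) ^ (x + y) = (genNat μ n 0) ^ x * (genNat μ n 0) ^ y :=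
        fun x y => pow_add _ x y
      have hg0 : (genNat μ n 0) ^ (0 : ℕ) = 1 := pow_zero _
      have hstep : ∀ k, genFrom μ k (n + 1) 0 = (pexp μ (fun x => (genNat μ n 0) ^ x)) ^ k := by
        intro k
        rw [genFrom_succ' μ n k, PMF.bind_apply]
        have : (∑' j : ℕ, (iidSumNat μ k) j * genFrom μ j n 0)
            = pexp (iidSumNat μ k) (fun j => (genNat μ n 0) ^ j) := by
          unfold pexp
          exact tsum_congr fun j => by rw [ih j]
        rw [this, pexp_iidSumNat μ _ hg hg0]
      intro k
      rw [hstep k]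
      have h1 : genNat μ (n + 1) 0 = pexp μ (fun x => (genNat μ n 0) ^ x) := by
        rw [genNat_eq_genFrom μ (n + 1), hstep 1, pow_one]
      rw [h1]

lemma genNat_succ_zero (μ : PMF ℕ) (n : ℕ) :
    genNat μ (n + 1) 0 = pexp μ (fun x => (genNat μ n 0) ^ x) := by
  rw [genNat_eq_genFrom μ (n + 1), genFrom_succ' μ n 1, PMF.bind_apply]
  have h2 : (∑' j : ℕ, (iidSumNat μ 1) j * genFrom μ j n 0)
      = pexp (iidSumNat μ 1) (fun j => (genNat μ n 0) ^ j) := by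
    unfold pexp
    exact tsum_congr fun j => by rw [genFrom_zero_pow μ n j]
  rw [h2, pexp_iidSumNat μ _ (fun x y => pow_add _ x y) (pow_zero _) 1, pow_one]


/-- **Lemma 3.2** (de Lima–Szabó–Valesin). Let `a⋆` be a distinguished type and
`λ : 𝒯 → ℕ` with `λ(a⋆) = 1` be such that
`P(Z survives ∣ Z_0 = e_a) ≤ P(Z survives ∣ Z_0 = λ(a)·e_{a⋆})` for all `a`.
Let `(Y_n)` be the single-type branching process with offspring distribution the law of
`Σ_a λ(a)·χ(a)`, `χ ~ p(a⋆,·)`.  If `(Y_n)` goes extinct a.s., then `Z` started from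
`e_{a⋆}` goes extinct a.s. -/
theorem extinction_comparison (p : T → PMF (T → ℕ)) (astar : T) (lam : T → ℕ)
    (hlam : lam astar = 1)
    (hmono : ∀ a : T,
      survivalProb p (single a) ≤
        survivalProb p (fun b => if b = astar then lam a else 0))
    (hY : extinctionProbNat ((p astar).map fun χ => ∑ a : T, lam a * χ a) = 1) :
    extinctionProb p (single astar) = 1 := by
  classical
  have hqmono : ∀ a : T, Monotone fun n => gen p (single a) n 0 :=
    fun a => gen_zero_mono p (single a)
  have ht1 : extinctionProb p (single astar) ≤ 1 :=
    iSup_le fun n => PMF.coe_le_one _ _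
  have hB : ∀ a : T, (extinctionProb p (single astar)) ^ lam a
      ≤ ⨆ n, gen p (single a) n 0 := by
    intro a
    have hx : ∀ (n : ℕ) (b : T),
        (gen p (single b) n 0) ^ (if b = astar then lam a else 0)
          = if b = astar then (gen p (single astar) n 0) ^ lam a else 1 := by
      intro n b
      by_cases hb : b = astar <;> simp [hb]
    have hext1 : extinctionProb p (fun b => if b = astar then lam a else 0)
        = ⨆ n, (gen p (single astar) n 0) ^ lam a := by
      refine iSup_congr fun n => ?_
      rw [gen_zero_prod p n]
      simp [hx n]
    have hle1 : extinctionProb p (fun b => if b = astar then lam a else 0) ≤ 1 :=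
      iSup_le fun n => PMF.coe_le_one _ _
    have h2 : extinctionProb p (fun b => if b = astar then lam a else 0)
        ≤ extinctionProb p (single a) :=
      (ENNReal.sub_le_sub_iff_left hle1 ENNReal.one_ne_top).mp (hmono a)
    rw [hext1] at h2
    calc (extinctionProb p (single astar)) ^ lam a
        = ⨆ n, (gen p (single astar) n 0) ^ lam a :=
          iSup_pow_mono _ (hqmono astar) _
      _ ≤ extinctionProb p (single a) := h2
      _ = ⨆ n, gen p (single a) n 0 := rfl
  have hf : pexp (p astar)
      (fun χ => ∏ a : T, (⨆ n, gen p (single a) n 0) ^ χ a)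
        ≤ extinctionProb p (single astar) := by
    have key : ∀ χ : T → ℕ,
        (∏ a : T, (⨆ n, gen p (single a) n 0) ^ χ a)
          = ⨆ n, ∏ a : T, (gen p (single a) n 0) ^ χ a := by
      intro χ
      have e1 : ∀ a : T, (⨆ n, gen p (single a) n 0) ^ χ a
          = ⨆ n, (gen p (single a) n 0) ^ χ a := fun a =>
        iSup_pow_mono _ (hqmono a) _
      simp_rw [e1]
      exact iSup_prod_mono Finset.univ _
        (fun a i j h => pow_le_pow_left' (hqmono a h) _)
    unfold pexp
    calc ∑' χ : T → ℕ, (p astar) χ * ∏ a : T, (⨆ n, gen p (single a) n 0) ^ χ a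
        = ∑' χ : T → ℕ, ⨆ n, (p astar) χ * ∏ a : T, (gen p (single a) n 0) ^ χ a := by
          refine tsum_congr fun χ => ?_
          rw [key χ, ENNReal.mul_iSup]
      _ = ⨆ n, ∑' χ : T → ℕ, (p astar) χ * ∏ a : T, (gen p (single a) n 0) ^ χ a :=
          tsum_iSup_mono _ (fun χ i j h => mul_le_mul' le_rfl
            (Finset.prod_le_prod' fun a _ => pow_le_pow_left' (hqmono a h) _))
      _ = ⨆ n, gen p (single astar) (n + 1) 0 :=
          iSup_congr fun n => (gen_single_succ p astar n).symm
      _ ≤ extinctionProb p (single astar) :=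
          iSup_le fun n => le_iSup (fun m => gen p (single astar) m 0) (n + 1)
  have hr : ∀ m : ℕ,
      genNat ((p astar).map fun χ => ∑ a : T, lam a * χ a) m 0
        ≤ extinctionProb p (single astar) := by
    intro m
    induction m with
    | zero =>
        show (PMF.pure 1 : PMF ℕ) 0 ≤ _
        simp [PMF.pure_apply]
    | succ m ih =>
        rw [genNat_succ_zero]
        calc pexp ((p astar).map fun χ => ∑ a : T, lam a * χ a)
              (fun x => (genNat ((p astar).map fun χ => ∑ a : T, lam a * χ a) m 0) ^ x)
            ≤ pexp ((p astar).map fun χ => ∑ a : T, lam a * χ a)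
              (fun x => (extinctionProb p (single astar)) ^ x) := by
              unfold pexp
              exact ENNReal.tsum_le_tsum fun x =>
                mul_le_mul' le_rfl (pow_le_pow_left' ih x)
          _ = pexp (p astar)
              (fun χ => (extinctionProb p (single astar)) ^ (∑ a : T, lam a * χ a)) :=
              pexp_map _ _ _
          _ = pexp (p astar)
              (fun χ => ∏ a : T, ((extinctionProb p (single astar)) ^ lam a) ^ χ a) := by
              unfold pexp
              refine tsum_congr fun χ => ?_
              congr 1
              show extinctionProb p (single astar) ^ (∑ a : T, lam a * χ a)
                  = ∏ a : T, (extinctionProb p (single astar) ^ lam a) ^ χ a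
              rw [← Finset.prod_pow_eq_pow_sum]
              exact Finset.prod_congr rfl fun a _ => by rw [pow_mul]
          _ ≤ pexp (p astar)
              (fun χ => ∏ a : T, (⨆ n, gen p (single a) n 0) ^ χ a) := by
              unfold pexp
              exact ENNReal.tsum_le_tsum fun χ => mul_le_mul' le_rfl
                (Finset.prod_le_prod' fun a _ => pow_le_pow_left' (hB a) _)
          _ ≤ extinctionProb p (single astar) := hf
  refine le_antisymm ht1 ?_
  rw [← hY]
  exact iSup_le hr

end Stmt6
end

section
/- Let Z be a multi-type branching process with type set 𝒯, offspring distribution p, and mean offspring matrix M, satisfying (⋆) and (P). Let a⋆ ∈ 𝒯 and I ⊂ 𝒯 \ {a⋆}, and assume Z_0 = e_{a⋆}. If M(a⋆, a⋆) + Σ_{a ∈ I} M(a⋆, a)·M(a, a⋆) > 1, then Z survives with positive probability. -/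
open scoped ENNReal

section MeanMatrix

variable {T : Type*} [Fintype T] [DecidableEq T]

/-- The mean offspring matrix `M(a,b) = E[Z_1(b) ∣ Z_0 = e_a]`. -/
noncomputable def meanMatrix (p : T → PMF (T → ℕ)) : Matrix T T ℝ≥0∞ :=
  Matrix.of fun a b => ∑' η : T → ℕ, p a η * (η b : ℝ≥0∞)

/-- Condition (⋆): some type has positive probability of producing a population with
more than one individual. -/
def CondStar (p : T → PMF (T → ℕ)) : Prop :=
  ∃ (a : T) (η : T → ℕ), p a η ≠ 0 ∧ 1 < ∑ b : T, η b

/-- Condition (P): some power of the mean offspring matrix has all entries positive. -/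
def CondPos (p : T → PMF (T → ℕ)) : Prop :=
  ∃ n : ℕ, ∀ a b : T, 0 < ((meanMatrix p) ^ n) a b

end MeanMatrix

set_option linter.unusedSectionVars false
namespace MTBPProof
variable {T : Type*} [Fintype T] [DecidableEq T]

noncomputable def Ex (μ : PMF (T → ℕ)) (g : (T → ℕ) → ℝ≥0∞) : ℝ≥0∞ := ∑' ζ, μ ζ * g ζ

lemma Ex_pure (x : T → ℕ) (g : (T → ℕ) → ℝ≥0∞) : Ex (PMF.pure x) g = g x := by
  rw [Ex]
  rw [tsum_eq_single x]
  · simp [PMF.pure_apply]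
  · intro b hb; simp [PMF.pure_apply, hb]

lemma Ex_bind (μ : PMF (T → ℕ)) (f : (T → ℕ) → PMF (T → ℕ)) (g : (T → ℕ) → ℝ≥0∞) :
    Ex (μ.bind f) g = ∑' x, μ x * Ex (f x) g := by
  simp only [Ex, PMF.bind_apply]
  calc ∑' ζ, (∑' x, μ x * f x ζ) * g ζ
      = ∑' ζ, ∑' x, μ x * (f x ζ * g ζ) := by
        congr 1; ext ζ
        rw [← ENNReal.tsum_mul_right]
        congr 1; ext x; ring
    _ = ∑' x, ∑' ζ, μ x * (f x ζ * g ζ) := ENNReal.tsum_comm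
    _ = ∑' x, μ x * ∑' ζ, f x ζ * g ζ := by
        congr 1; ext x; rw [ENNReal.tsum_mul_left]

lemma Ex_map (μ : PMF (T → ℕ)) (h : (T → ℕ) → (T → ℕ)) (g : (T → ℕ) → ℝ≥0∞) :
    Ex (μ.map h) g = ∑' x, μ x * g (h x) := by
  rw [PMF.map, Ex_bind]
  simp [Ex_pure]

noncomputable def gf (s : T → ℝ≥0∞) (ζ : T → ℕ) : ℝ≥0∞ := ∏ b, s b ^ ζ b

lemma gf_add (s : T → ℝ≥0∞) (x y : T → ℕ) : gf s (x + y) = gf s x * gf s y := by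
  simp [gf, pow_add, Finset.prod_mul_distrib]

lemma gf_zero (s : T → ℝ≥0∞) : gf s 0 = 1 := by simp [gf]

lemma Ex_addPMF (s : T → ℝ≥0∞) (μ ν : PMF (T → ℕ)) :
    Ex (addPMF μ ν) (gf s) = Ex μ (gf s) * Ex ν (gf s) := by
  rw [addPMF, Ex_bind]
  simp only [Ex_map, gf_add]
  simp only [Ex]
  rw [← ENNReal.tsum_mul_right]
  congr 1; ext x
  rw [← ENNReal.tsum_mul_left, ← ENNReal.tsum_mul_left]
  congr 1; ext y; ring

lemma Ex_iidSum (s : T → ℝ≥0∞) (μ : PMF (T → ℕ)) (k : ℕ) :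
    Ex (iidSum μ k) (gf s) = (Ex μ (gf s)) ^ k := by
  induction k with
  | zero => simp [iidSum, Ex_pure, gf_zero]
  | succ k ih => rw [iidSum, Ex_addPMF, ih, pow_succ]; ring

lemma Ex_branchStep (s : T → ℝ≥0∞) (p : T → PMF (T → ℕ)) (η : T → ℕ) :
    Ex (branchStep p η) (gf s) = ∏ a, (Ex (p a) (gf s)) ^ η a := by
  rw [branchStep, ← Finset.prod_map_toList]
  generalize (Finset.univ : Finset T).toList = L
  induction L with
  | nil => simp [Ex_pure, gf_zero]
  | cons a L ih => simp [Ex_addPMF, ih, Ex_iidSum]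

lemma gen_succ' (p : T → PMF (T → ℕ)) (η : T → ℕ) (n : ℕ) :
    gen p η (n + 1) = (branchStep p η).bind (fun ζ => gen p ζ n) := by
  induction n generalizing η with
  | zero => simp [gen]
  | succ n ih =>
      show (gen p η (n+1)).bind (branchStep p) = _
      rw [ih, PMF.bind_bind]
      congr 1


lemma gf_le_one {s : T → ℝ≥0∞} (hs : ∀ b, s b ≤ 1) (ζ : T → ℕ) : gf s ζ ≤ 1 :=
  Finset.prod_le_one (fun b _ => zero_le) (fun b _ => pow_le_one' (hs b) _)

lemma Ex_le_one {s : T → ℝ≥0∞} (hs : ∀ b, s b ≤ 1) (μ : PMF (T → ℕ)) : Ex μ (gf s) ≤ 1 := by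
  calc Ex μ (gf s) ≤ ∑' ζ, μ ζ * 1 :=
        ENNReal.tsum_le_tsum fun ζ => mul_le_mul_right (gf_le_one hs ζ) _
    _ = 1 := by simp [μ.tsum_coe]

lemma gen_zero_le {p : T → PMF (T → ℕ)} {s : T → ℝ≥0∞} (hs : ∀ b, s b ≤ 1)
    (hsub : ∀ a, Ex (p a) (gf s) ≤ s a) :
    ∀ n η, gen p η n 0 ≤ gf s η := by
  intro n
  induction n with
  | zero =>
      intro η
      by_cases h : (0 : T → ℕ) = η
      · subst h; simp [gen, gf_zero]
      · simp [gen, PMF.pure_apply, h]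
  | succ n ih =>
      intro η
      rw [gen_succ', PMF.bind_apply]
      calc ∑' ζ, branchStep p η ζ * gen p ζ n 0
          ≤ ∑' ζ, branchStep p η ζ * gf s ζ :=
            ENNReal.tsum_le_tsum fun ζ => mul_le_mul_right (ih ζ) _
        _ = Ex (branchStep p η) (gf s) := rfl
        _ = ∏ a, (Ex (p a) (gf s)) ^ η a := Ex_branchStep s p η
        _ ≤ ∏ a, (s a) ^ η a := Finset.prod_le_prod' fun a _ => pow_le_pow_left' (hsub a) _
        _ = gf s η := rfl

lemma step_real (P S x : ℝ) (k : ℕ) (hP0 : 0 ≤ P) (hP : P ≤ 1 - S + S ^ 2) (hS : 0 ≤ S)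
    (hx0 : 0 ≤ x) (hx1 : x ≤ 1) :
    P * (1 - x) ^ k ≤ 1 - (S + k * x) + (S + k * x) ^ 2 := by
  induction k with
  | zero => simpa using hP
  | succ k ih =>
      have h1x : (0 : ℝ) ≤ 1 - x := by linarith
      have hkx : (0 : ℝ) ≤ S + k * x := by positivity
      have h2 : P * (1 - x) ^ (k + 1) ≤ (1 - (S + k * x) + (S + k * x) ^ 2) * (1 - x) := by
        calc P * (1 - x) ^ (k + 1) = (P * (1 - x) ^ k) * (1 - x) := by ring
          _ ≤ _ := mul_le_mul_of_nonneg_right ih h1x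
      refine h2.trans ?_
      have hcast : (((k : ℕ) + 1 : ℕ) : ℝ) = (k : ℝ) + 1 := by push_cast; ring
      rw [hcast]
      nlinarith [mul_nonneg hkx hx0, mul_nonneg (mul_nonneg hkx hkx) hx0, sq_nonneg x]

lemma prod_pow_le (x : T → ℝ) (η : T → ℕ) (h0 : ∀ b, 0 ≤ x b) (h1 : ∀ b, x b ≤ 1) :
    ∏ b, (1 - x b) ^ η b ≤
      1 - (∑ b, (η b : ℝ) * x b) + (∑ b, (η b : ℝ) * x b) ^ 2 := by
  classical
  have key : ∀ A : Finset T, ∏ b ∈ A, (1 - x b) ^ η b ≤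
      1 - (∑ b ∈ A, (η b : ℝ) * x b) + (∑ b ∈ A, (η b : ℝ) * x b) ^ 2 := by
    intro A
    induction A using Finset.induction with
    | empty => simp
    | @insert a A hnot ih =>
        rw [Finset.prod_insert hnot, Finset.sum_insert hnot]
        have hP0 : (0:ℝ) ≤ ∏ b ∈ A, (1 - x b) ^ η b :=
          Finset.prod_nonneg fun b _ => pow_nonneg (by linarith [h1 b]) _
        have hS : (0:ℝ) ≤ ∑ b ∈ A, (η b : ℝ) * x b :=
          Finset.sum_nonneg fun b _ => mul_nonneg (by positivity) (h0 b)
        have := step_real _ _ (x a) (η a) hP0 ih hS (h0 a) (h1 a)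
        calc (1 - x a) ^ η a * ∏ b ∈ A, (1 - x b) ^ η b
            = (∏ b ∈ A, (1 - x b) ^ η b) * (1 - x a) ^ η a := by ring
          _ ≤ _ := this
          _ = _ := by ring
  exact key Finset.univ


lemma one_sub_gf_ge (v : T → ℝ) (hv0 : ∀ b, 0 ≤ v b) (ε : ℝ) (hε0 : 0 ≤ ε)
    (hεv : ∀ b, ε * v b ≤ 1) (K : ℝ) (hεK : ε * K ≤ 1) (η : T → ℕ)
    (hWK : (∑ b, (η b : ℝ) * v b) ≤ K) :
    ENNReal.ofReal (ε * (1 - ε * K) * (∑ b, (η b : ℝ) * v b)) ≤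
      1 - gf (fun b => ENNReal.ofReal (1 - ε * v b)) η := by
  set W := ∑ b, (η b : ℝ) * v b with hW
  have hW0 : 0 ≤ W := Finset.sum_nonneg fun b _ => mul_nonneg (by positivity) (hv0 b)
  have hgf : gf (fun b => ENNReal.ofReal (1 - ε * v b)) η
      = ENNReal.ofReal (∏ b, (1 - ε * v b) ^ η b) := by
    rw [gf, ENNReal.ofReal_prod_of_nonneg fun b _ => pow_nonneg (by linarith [hεv b]) _]
    exact Finset.prod_congr rfl fun b _ => (ENNReal.ofReal_pow (by linarith [hεv b]) _).symm
  rw [hgf]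
  refine ENNReal.le_sub_of_add_le_right (by
    intro h
    exact (lt_of_le_of_lt (le_of_eq h.symm) (ENNReal.ofReal_lt_top)).ne rfl) ?_
  rw [← ENNReal.ofReal_add (mul_nonneg (mul_nonneg hε0 (by linarith)) hW0) (Finset.prod_nonneg fun b _ => pow_nonneg (by linarith [hεv b]) _)]
  rw [← ENNReal.ofReal_one]
  apply ENNReal.ofReal_le_ofReal
  have hprod : ∏ b, (1 - ε * v b) ^ η b ≤ 1 - ε * W + (ε * W) ^ 2 := by
    have h2 := prod_pow_le (fun b => ε * v b) η (fun b => mul_nonneg hε0 (hv0 b)) hεv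
    have hsum : ∑ b, (η b : ℝ) * (ε * v b) = ε * W := by
      rw [hW, Finset.mul_sum]; exact Finset.sum_congr rfl fun b _ => by ring
    rwa [hsum] at h2
  nlinarith [mul_nonneg hε0 hW0, mul_nonneg (mul_nonneg hε0 hW0) (mul_nonneg hε0 (sub_nonneg.2 hWK))]

lemma Ex_le_of_H (p : T → PMF (T → ℕ)) (a : T) (s : T → ℝ≥0∞) (hs : ∀ b, s b ≤ 1)
    (c : ℝ≥0∞) (hH : c ≤ ∑' η, p a η * (1 - gf s η)) : Ex (p a) (gf s) ≤ 1 - c := by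
  have hH1 : (∑' η, p a η * (1 - gf s η)) ≤ 1 := by
    calc (∑' η, p a η * (1 - gf s η)) ≤ ∑' η, p a η * 1 :=
          ENNReal.tsum_le_tsum fun η => mul_le_mul_right tsub_le_self _
      _ = 1 := by simp [(p a).tsum_coe]
  have hsplit : Ex (p a) (gf s) + ∑' η, p a η * (1 - gf s η) = 1 := by
    rw [Ex, ← ENNReal.tsum_add]
    have h3 : ∀ η, p a η * gf s η + p a η * (1 - gf s η) = p a η := by
      intro η
      rw [← mul_add, add_tsub_cancel_of_le (gf_le_one hs η), mul_one]
    simp_rw [h3]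
    exact (p a).tsum_coe
  have hEx : Ex (p a) (gf s) = 1 - ∑' η, p a η * (1 - gf s η) :=
    ENNReal.eq_sub_of_add_eq (by exact (lt_of_le_of_lt hH1 (by norm_num)).ne) hsplit
  rw [hEx]
  exact tsub_le_tsub_left hH 1


lemma gf_single (s : T → ℝ≥0∞) (a : T) : gf s (fun b => if b = a then 1 else 0) = s a := by
  rw [gf]
  rw [Finset.prod_eq_single a (fun b _ hb => by simp [hb]) (by simp)]
  simp

lemma iSup_min_nat (x : ℝ≥0∞) : ⨆ n : ℕ, min x n = x := by
  refine le_antisymm (iSup_le fun n => min_le_left _ _) ?_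
  rcases eq_or_ne x ⊤ with h | h
  · subst h
    calc ⊤ = ⨆ n : ℕ, (n : ℝ≥0∞) := ENNReal.iSup_natCast.symm
      _ ≤ ⨆ n : ℕ, min ⊤ (n : ℝ≥0∞) := iSup_mono fun n => by simp
  · obtain ⟨n, hn⟩ := ENNReal.exists_nat_gt h
    calc x = min x n := (min_eq_left hn.le).symm
      _ ≤ _ := le_iSup (fun n : ℕ => min x (n : ℝ≥0∞)) n

lemma min_nat_mono (x : ℝ≥0∞) : Monotone (fun n : ℕ => min x (n : ℝ≥0∞)) :=
  fun _ _ h => min_le_min le_rfl (Nat.cast_le.2 h)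

lemma iSup_mul_mono {f g : ℕ → ℝ≥0∞} (hf : Monotone f) (hg : Monotone g) :
    (⨆ n, f n) * (⨆ n, g n) = ⨆ n, f n * g n := by
  refine le_antisymm ?_ (iSup_le fun n => mul_le_mul' (le_iSup f n) (le_iSup g n))
  rw [ENNReal.iSup_mul]
  refine iSup_le fun i => ?_
  rw [ENNReal.mul_iSup]
  refine iSup_le fun j => ?_
  exact le_iSup_of_le (max i j)
    (mul_le_mul' (hf (le_max_left i j)) (hg (le_max_right i j)))

lemma exists_finite_trunc (X : ℝ≥0∞) (Y Z : T → ℝ≥0∞) (I : Finset T)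
    (h : 1 < X + ∑ a ∈ I, Y a * Z a) :
    ∃ n : ℕ, 1 < min X n + ∑ a ∈ I, min (Y a) n * min (Z a) n := by
  have hkey : X + ∑ a ∈ I, Y a * Z a
      = ⨆ n : ℕ, (min X n + ∑ a ∈ I, min (Y a) n * min (Z a) n) := by
    have h1 : ∀ a : T, Y a * Z a = ⨆ n : ℕ, min (Y a) n * min (Z a) n := fun a => by
      rw [← iSup_mul_mono (min_nat_mono (Y a)) (min_nat_mono (Z a)), iSup_min_nat, iSup_min_nat]
    calc X + ∑ a ∈ I, Y a * Z a
        = (⨆ n : ℕ, min X n) + ∑ a ∈ I, ⨆ n : ℕ, min (Y a) n * min (Z a) n := by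
          rw [iSup_min_nat]
          congr 1
          exact Finset.sum_congr rfl fun a _ => h1 a
      _ = (⨆ n : ℕ, min X n) + ⨆ n : ℕ, ∑ a ∈ I, min (Y a) n * min (Z a) n := by
          congr 1
          exact ENNReal.finsetSum_iSup_of_monotone fun a i j hij =>
            mul_le_mul' (min_nat_mono (Y a) hij) (min_nat_mono (Z a) hij)
      _ = ⨆ n : ℕ, (min X n + ∑ a ∈ I, min (Y a) n * min (Z a) n) :=
          ENNReal.iSup_add_iSup_of_monotone (min_nat_mono X)
            (fun i j hij => Finset.sum_le_sum fun a _ =>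
              mul_le_mul' (min_nat_mono (Y a) hij) (min_nat_mono (Z a) hij))
  rw [hkey] at h
  exact lt_iSup_iff.mp h

lemma theta_sel (x S : ℝ) (hS : 0 ≤ S) (h : 1 < x + S) :
    ∃ θ : ℝ, 0 < θ ∧ θ < 1 ∧ 1 < x + θ * S := by
  rcases eq_or_lt_of_le hS with hS0 | hS0
  · exact ⟨1/2, by norm_num, by norm_num, by rw [← hS0] at h ⊢; linarith⟩
  · set t := (x + S - 1) / (2 * S) with ht
    have ht0 : 0 < t := div_pos (by linarith) (by linarith)
    have htid : 2 * S * t = x + S - 1 := by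
      rw [ht]; field_simp
    refine ⟨max (1/2) (1 - t), lt_max_of_lt_left (by norm_num), ?_, ?_⟩
    · apply max_lt (by norm_num) (by linarith)
    · have h2 : 1 < x + (1 - t) * S := by nlinarith
      have h3 : (1 - t) * S ≤ max (1/2) (1 - t) * S :=
        mul_le_mul_of_nonneg_right (le_max_right _ _) hS
      linarith

lemma ofReal_W (v : T → ℝ) (hv0 : ∀ b, 0 ≤ v b) (η : T → ℕ) :
    ENNReal.ofReal (∑ b, (η b : ℝ) * v b) = ∑ b, (η b : ℝ≥0∞) * ENNReal.ofReal (v b) := by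
  rw [ENNReal.ofReal_sum_of_nonneg (fun b _ => mul_nonneg (by positivity) (hv0 b))]
  exact Finset.sum_congr rfl fun b _ => by
    rw [ENNReal.ofReal_mul (by positivity), ENNReal.ofReal_natCast]

lemma tsum_W (p : T → PMF (T → ℕ)) (a : T) (u : T → ℝ≥0∞) :
    ∑' η, p a η * ∑ b, (η b : ℝ≥0∞) * u b = ∑ b, meanMatrix p a b * u b := by
  have h1 : ∀ η : T → ℕ, p a η * ∑ b, (η b : ℝ≥0∞) * u b
      = ∑ b, p a η * (η b : ℝ≥0∞) * u b := fun η => by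
    rw [Finset.mul_sum]
    exact Finset.sum_congr rfl fun b _ => by ring
  simp_rw [h1]
  rw [Summable.tsum_finsetSum fun b _ => ENNReal.summable]
  refine Finset.sum_congr rfl fun b _ => ?_
  rw [ENNReal.tsum_mul_right]
  rfl


lemma s_le_one (v : T → ℝ) (ε : ℝ) (hεv0 : ∀ b, 0 ≤ ε * v b) (b : T) :
    ENNReal.ofReal (1 - ε * v b) ≤ 1 := by
  calc ENNReal.ofReal (1 - ε * v b) ≤ ENNReal.ofReal 1 :=
        ENNReal.ofReal_le_ofReal (by linarith [hεv0 b])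
    _ = 1 := ENNReal.ofReal_one

lemma subsol_at (p : T → PMF (T → ℕ)) (a : T) (v : T → ℝ) (hv0 : ∀ b, 0 ≤ v b)
    (ε : ℝ) (hε0 : 0 ≤ ε) (hεv : ∀ b, ε * v b ≤ 1)
    (F : Finset (T → ℕ)) (K : ℝ) (hK : ∀ η ∈ F, (∑ b, (η b : ℝ) * v b) ≤ K) (hεK : ε * K ≤ 1)
    (hgoal : ENNReal.ofReal (ε * v a) ≤ ENNReal.ofReal (ε * (1 - ε * K)) *
        ∑ η ∈ F, p a η * ENNReal.ofReal (∑ b, (η b : ℝ) * v b)) :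
    Ex (p a) (gf (fun b => ENNReal.ofReal (1 - ε * v b))) ≤ ENNReal.ofReal (1 - ε * v a) := by
  set s : T → ℝ≥0∞ := fun b => ENNReal.ofReal (1 - ε * v b) with hsdef
  have hs : ∀ b, s b ≤ 1 := s_le_one v ε (fun b => mul_nonneg hε0 (hv0 b))
  have hH : ENNReal.ofReal (ε * v a) ≤ ∑' η, p a η * (1 - gf s η) := by
    refine hgoal.trans ?_
    rw [Finset.mul_sum]
    refine le_trans (Finset.sum_le_sum fun η hη => ?_) (ENNReal.sum_le_tsum F)
    rw [← mul_assoc, mul_comm (ENNReal.ofReal (ε * (1 - ε * K))) (p a η), mul_assoc]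
    refine mul_le_mul_right ?_ _
    rw [← ENNReal.ofReal_mul (mul_nonneg hε0 (by linarith))]
    exact one_sub_gf_ge v hv0 ε hε0 hεv K hεK η (hK η hη)
  have hfin := Ex_le_of_H p a s hs _ hH
  have hone : (1 : ℝ≥0∞) - ENNReal.ofReal (ε * v a) = ENNReal.ofReal (1 - ε * v a) := by
    rw [ENNReal.ofReal_sub _ (mul_nonneg hε0 (hv0 a)), ENNReal.ofReal_one]
  rw [hone] at hfin
  exact hfin


lemma choice_at (p : T → PMF (T → ℕ)) (v : T → ℝ) (hv0 : ∀ b, 0 ≤ v b) (a : T)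
    (hMv : v a ≠ 0 → ENNReal.ofReal (v a) < ∑ b, meanMatrix p a b * ENNReal.ofReal (v b)) :
    ∃ ε0 : ℝ, 0 < ε0 ∧ ∀ ε : ℝ, 0 < ε → ε ≤ ε0 → (∀ b, ε * v b ≤ 1) →
      Ex (p a) (gf (fun b => ENNReal.ofReal (1 - ε * v b))) ≤ ENNReal.ofReal (1 - ε * v a) := by
  have hW0 : ∀ η : T → ℕ, 0 ≤ ∑ b, (η b : ℝ) * v b := fun η =>
    Finset.sum_nonneg fun b _ => mul_nonneg (by positivity) (hv0 b)
  by_cases hva : v a = 0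
  · refine ⟨1, one_pos, fun ε hε hε1 hεv => ?_⟩
    rw [hva, mul_zero, sub_zero, ENNReal.ofReal_one]
    exact Ex_le_one (s_le_one v ε fun b => mul_nonneg hε.le (hv0 b)) _
  · have hlt := hMv hva
    have htsum : ∑ b, meanMatrix p a b * ENNReal.ofReal (v b)
        = ∑' η, p a η * ENNReal.ofReal (∑ b, (η b : ℝ) * v b) := by
      rw [← tsum_W p a (fun b => ENNReal.ofReal (v b))]
      exact tsum_congr fun η => by rw [ofReal_W v hv0 η]
    rw [htsum, ENNReal.tsum_eq_iSup_sum] at hlt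
    obtain ⟨F, hF⟩ := lt_iSup_iff.mp hlt
    set B := ∑ η ∈ F, p a η * ENNReal.ofReal (∑ b, (η b : ℝ) * v b) with hB
    have hBfin : B ≠ ⊤ := by
      refine (ENNReal.sum_lt_top.mpr fun η _ => ?_).ne
      exact ENNReal.mul_lt_top (lt_of_le_of_lt ((p a).coe_le_one η) ENNReal.one_lt_top)
        ENNReal.ofReal_lt_top
    set β := B.toReal with hβ
    have hBof : B = ENNReal.ofReal β := (ENNReal.ofReal_toReal hBfin).symm
    have hvβ : v a < β := by
      rw [hBof] at hF
      exact (ENNReal.ofReal_lt_ofReal_iff_of_nonneg (hv0 a)).mp hF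
    have hβ0 : 0 < β := lt_of_le_of_lt (hv0 a) hvβ
    set K := ∑ η ∈ F, ∑ b, (η b : ℝ) * v b with hKdef
    have hK0 : 0 ≤ K := Finset.sum_nonneg fun η _ => hW0 η
    have hKW : ∀ η ∈ F, (∑ b, (η b : ℝ) * v b) ≤ K := fun η hη =>
      Finset.single_le_sum (fun η _ => hW0 η) hη
    have hden : 0 < (K + 1) * β + 1 := by positivity
    refine ⟨(β - v a) / ((K + 1) * β + 1), div_pos (by linarith) hden, fun ε hε hε1 hεv => ?_⟩
    have h2 : ε * ((K + 1) * β + 1) ≤ β - v a := (le_div_iff₀ hden).mp hε1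
    have h2' : ε * K * β + ε * β + ε ≤ β - v a := by nlinarith [h2]
    have hεK : ε * K ≤ 1 := by nlinarith [h2', hv0 a, hε.le, mul_nonneg hε.le hβ0.le]
    have hmain : v a ≤ (1 - ε * K) * β := by nlinarith [h2', mul_nonneg hε.le hβ0.le, hε.le]
    apply subsol_at p a v hv0 ε hε.le hεv F K hKW hεK
    rw [← hB, hBof, ← ENNReal.ofReal_mul (mul_nonneg hε.le (by linarith))]
    apply ENNReal.ofReal_le_ofReal
    calc ε * v a ≤ ε * ((1 - ε * K) * β) := mul_le_mul_of_nonneg_left hmain hε.le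
      _ = ε * (1 - ε * K) * β := by ring

end MTBPProof

/-- **Lemma 3.3(a)** (de Lima–Szabó–Valesin). Let `Z` be a multi-type branching process
satisfying (⋆) and (P), let `a⋆` be a type and `I ⊆ 𝒯 \ {a⋆}`.  If
`M(a⋆,a⋆) + Σ_{a ∈ I} M(a⋆,a)·M(a,a⋆) > 1`, then `Z` started from `e_{a⋆}` survives
with positive probability. -/
theorem survival_of_mean_gt_one {T : Type*} [Fintype T] [DecidableEq T]
    (p : T → PMF (T → ℕ)) (hstar : CondStar p) (hpos : CondPos p)
    (astar : T) (I : Finset T) (hI : astar ∉ I)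
    (hmean : 1 < meanMatrix p astar astar +
      ∑ a ∈ I, meanMatrix p astar a * meanMatrix p a astar) :
    0 < survivalProb p (single astar) := by
  classical
  clear hstar hpos
  have hTne : Nonempty T := ⟨astar⟩
  obtain ⟨n, hn⟩ := MTBPProof.exists_finite_trunc (meanMatrix p astar astar)
    (fun a => meanMatrix p astar a) (fun a => meanMatrix p a astar) I hmean
  have hfinm : ∀ x : ℝ≥0∞, min x (n : ℝ≥0∞) ≠ ⊤ :=
    fun x => (lt_of_le_of_lt (min_le_right _ _) (ENNReal.natCast_lt_top n)).ne
  set xr : ℝ := (min (meanMatrix p astar astar) (n : ℝ≥0∞)).toReal with hxrdef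
  set yr : T → ℝ := fun a => (min (meanMatrix p astar a) (n : ℝ≥0∞)).toReal with hyrdef
  set zr : T → ℝ := fun a => (min (meanMatrix p a astar) (n : ℝ≥0∞)).toReal with hzrdef
  have hxr0 : 0 ≤ xr := ENNReal.toReal_nonneg
  have hyr0 : ∀ a, 0 ≤ yr a := fun a => ENNReal.toReal_nonneg
  have hzr0 : ∀ a, 0 ≤ zr a := fun a => ENNReal.toReal_nonneg
  have hofx : ENNReal.ofReal xr ≤ meanMatrix p astar astar := by
    rw [hxrdef, ENNReal.ofReal_toReal (hfinm _)]; exact min_le_left _ _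
  have hofy : ∀ a, ENNReal.ofReal (yr a) ≤ meanMatrix p astar a := fun a => by
    rw [hyrdef, ENNReal.ofReal_toReal (hfinm _)]; exact min_le_left _ _
  have hofz : ∀ a, ENNReal.ofReal (zr a) ≤ meanMatrix p a astar := fun a => by
    rw [hzrdef, ENNReal.ofReal_toReal (hfinm _)]; exact min_le_left _ _
  have hx1 : 1 < xr + ∑ a ∈ I, yr a * zr a := by
    have hFne : (min (meanMatrix p astar astar) (n : ℝ≥0∞) +
        ∑ a ∈ I, min (meanMatrix p astar a) (n : ℝ≥0∞) * min (meanMatrix p a astar) (n : ℝ≥0∞)) ≠ ⊤ := by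
      refine ENNReal.add_ne_top.mpr ⟨hfinm _, ?_⟩
      refine (ENNReal.sum_lt_top.mpr fun a _ => ?_).ne
      exact ENNReal.mul_lt_top (lt_of_le_of_lt (min_le_right _ _) (ENNReal.natCast_lt_top n))
        (lt_of_le_of_lt (min_le_right _ _) (ENNReal.natCast_lt_top n))
    have h1 := (ENNReal.toReal_lt_toReal (by simp) hFne).mpr hn
    rw [ENNReal.toReal_one] at h1
    rw [ENNReal.toReal_add (hfinm _) (by
      refine (ENNReal.sum_lt_top.mpr fun a _ => ?_).ne
      exact ENNReal.mul_lt_top (lt_of_le_of_lt (min_le_right _ _) (ENNReal.natCast_lt_top n))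
        (lt_of_le_of_lt (min_le_right _ _) (ENNReal.natCast_lt_top n)))] at h1
    rw [ENNReal.toReal_sum (fun a _ => (ENNReal.mul_lt_top
      (lt_of_le_of_lt (min_le_right _ _) (ENNReal.natCast_lt_top n))
      (lt_of_le_of_lt (min_le_right _ _) (ENNReal.natCast_lt_top n))).ne)] at h1
    simp_rw [ENNReal.toReal_mul] at h1
    exact h1
  have hS0 : 0 ≤ ∑ a ∈ I, yr a * zr a :=
    Finset.sum_nonneg fun a _ => mul_nonneg (hyr0 a) (hzr0 a)
  obtain ⟨θ, hθ0, hθ1, hθ⟩ := MTBPProof.theta_sel xr _ hS0 hx1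
  set v : T → ℝ := fun b => if b = astar then 1 else if b ∈ I then θ * zr b else 0 with hvdef
  have hv0 : ∀ b, 0 ≤ v b := by
    intro b
    rw [hvdef]
    dsimp only
    split
    · norm_num
    · split
      · exact mul_nonneg hθ0.le (hzr0 b)
      · exact le_refl 0
  have hvastar : v astar = 1 := by rw [hvdef]; simp
  have hvI : ∀ a ∈ I, v a = θ * zr a := by
    intro a ha
    have hne : a ≠ astar := fun h => hI (h ▸ ha)
    rw [hvdef]; simp [hne, ha]
  have hMv : ∀ a, v a ≠ 0 →
      ENNReal.ofReal (v a) < ∑ b, meanMatrix p a b * ENNReal.ofReal (v b) := by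
    intro a ha
    by_cases haI : a = astar
    · subst haI
      have hsub : insert a I ⊆ Finset.univ := Finset.subset_univ _
      have hstep1 : ∑ b ∈ insert a I, meanMatrix p a b * ENNReal.ofReal (v b)
          ≤ ∑ b, meanMatrix p a b * ENNReal.ofReal (v b) :=
        Finset.sum_le_sum_of_subset hsub
      have hstep2 : ENNReal.ofReal (xr + θ * ∑ c ∈ I, yr c * zr c)
          ≤ ∑ b ∈ insert a I, meanMatrix p a b * ENNReal.ofReal (v b) := by
        rw [Finset.sum_insert hI, hvastar]
        have hxpart : ENNReal.ofReal xr ≤ meanMatrix p a a * ENNReal.ofReal 1 := by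
          rw [ENNReal.ofReal_one, mul_one]; exact hofx
        have hrw : xr + θ * ∑ c ∈ I, yr c * zr c = xr + ∑ c ∈ I, yr c * (θ * zr c) := by
          rw [Finset.mul_sum]
          congr 1
          exact Finset.sum_congr rfl fun c _ => by ring
        rw [hrw, ENNReal.ofReal_add hxr0 (Finset.sum_nonneg fun c _ =>
          mul_nonneg (hyr0 c) (mul_nonneg hθ0.le (hzr0 c)))]
        refine add_le_add hxpart ?_
        rw [ENNReal.ofReal_sum_of_nonneg fun c _ =>
          mul_nonneg (hyr0 c) (mul_nonneg hθ0.le (hzr0 c))]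
        refine Finset.sum_le_sum fun c hc => ?_
        rw [ENNReal.ofReal_mul (hyr0 c), hvI c hc]
        exact mul_le_mul' (hofy c) le_rfl
      refine lt_of_lt_of_le (lt_of_lt_of_le ?_ hstep2) hstep1
      rw [hvastar]
      exact (ENNReal.ofReal_lt_ofReal_iff_of_nonneg (by norm_num)).mpr hθ
    · have haI2 : a ∈ I := by
        by_contra haI2
        apply ha
        rw [hvdef]; simp [haI, haI2]
      have hva : v a = θ * zr a := hvI a haI2
      have hz0 : 0 < zr a := by
        rcases lt_or_eq_of_le (hzr0 a) with h | h
        · exact h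
        · exact absurd (by rw [hva, ← h, mul_zero]) ha
      have hstep1 : meanMatrix p a astar * ENNReal.ofReal (v astar)
          ≤ ∑ b, meanMatrix p a b * ENNReal.ofReal (v b) :=
        Finset.single_le_sum (f := fun b => meanMatrix p a b * ENNReal.ofReal (v b))
          (fun b _ => zero_le) (Finset.mem_univ astar)
      refine lt_of_lt_of_le ?_ hstep1
      rw [hvastar, ENNReal.ofReal_one, mul_one, hva]
      refine lt_of_lt_of_le ?_ (hofz a)
      exact (ENNReal.ofReal_lt_ofReal_iff_of_nonneg
        (mul_nonneg hθ0.le (hzr0 a))).mpr (by nlinarith)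
  have hch : ∀ a : T, ∃ ε0 : ℝ, 0 < ε0 ∧ ∀ ε : ℝ, 0 < ε → ε ≤ ε0 → (∀ b, ε * v b ≤ 1) →
      MTBPProof.Ex (p a) (MTBPProof.gf (fun b => ENNReal.ofReal (1 - ε * v b)))
        ≤ ENNReal.ofReal (1 - ε * v a) :=
    fun a => MTBPProof.choice_at p v hv0 a (hMv a)
  choose ε0 hε0pos hε0spec using hch
  set V : ℝ := ∑ b, v b with hVdef
  have hV0 : 0 ≤ V := Finset.sum_nonneg fun b _ => hv0 b
  have hvV : ∀ b, v b ≤ V := fun b =>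
    Finset.single_le_sum (fun c _ => hv0 c) (Finset.mem_univ b)
  have huniv : (Finset.univ : Finset T).Nonempty := ⟨astar, Finset.mem_univ astar⟩
  set ε : ℝ := min (Finset.univ.inf' huniv ε0) (1 / (V + 1)) with hεdef
  have hε0 : 0 < ε := by
    refine lt_min ?_ (by positivity)
    rw [Finset.lt_inf'_iff]
    exact fun a _ => hε0pos a
  have hεle : ∀ a, ε ≤ ε0 a := fun a =>
    (min_le_left _ _).trans (Finset.inf'_le _ (Finset.mem_univ a))
  have hεv : ∀ b, ε * v b ≤ 1 := by
    intro b
    have h1 : ε ≤ 1 / (V + 1) := min_le_right _ _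
    have h2 : ε * v b ≤ (1 / (V + 1)) * V :=
      mul_le_mul h1 (hvV b) (hv0 b) (by positivity)
    calc ε * v b ≤ (1 / (V + 1)) * V := h2
      _ ≤ 1 := by rw [div_mul_eq_mul_div, one_mul, div_le_one (by linarith)]; linarith
  set sf : T → ℝ≥0∞ := fun b => ENNReal.ofReal (1 - ε * v b) with hsfdef
  have hs1 : ∀ b, sf b ≤ 1 := MTBPProof.s_le_one v ε fun b => mul_nonneg hε0.le (hv0 b)
  have hsub : ∀ a, MTBPProof.Ex (p a) (MTBPProof.gf sf) ≤ sf a :=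
    fun a => hε0spec a ε hε0 (hεle a) hεv
  have hext : extinctionProb p (single astar) ≤ sf astar := by
    rw [extinctionProb]
    refine iSup_le fun m => ?_
    have h1 := MTBPProof.gen_zero_le hs1 hsub m (single astar)
    have h2 : MTBPProof.gf sf (single astar) = sf astar := MTBPProof.gf_single sf astar
    rw [h2] at h1
    exact h1
  have hlt1 : sf astar < 1 := by
    rw [hsfdef]
    dsimp only
    rw [hvastar, mul_one]
    exact ENNReal.ofReal_lt_one.mpr (by linarith)
  rw [survivalProb]
  exact tsub_pos_iff_lt.mpr (lt_of_le_of_lt hext hlt1)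
end

section
/- Let B ⊂ V be admissible. Then: (i) every equivalence class B' ∈ ℬ^B is admissible; and (ii) the full subtrees V^{b(B')}, as B' ranges over ℬ^B, are pairwise disjoint and each is disjoint from C_s^B. -/
open MeasureTheory ProbabilityTheory Filter

/-- One open *short* edge step from `v` to `w`. -/
def shortStep (d : ℕ) (ω : Config d) (v w : Vert d) : Prop :=
  ∃ s : List (Fin d), s.length = 1 ∧ w = v ++ s ∧ ω (v, s) = true

/-- `C_s^B`: the short cluster of `B`, i.e. all vertices reachable from `B` by oriented
open paths using only short edges (with `B ⊆ C_s^B`). -/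
def shortCluster (d : ℕ) (ω : Config d) (B : Set (Vert d)) : Set (Vert d) :=
  {w | ∃ v ∈ B, Relation.ReflTransGen (shortStep d ω) v w}

/-- `C_ℓ^B`: the vertices outside `C_s^B` which are endpoints of open long edges
starting in `C_s^B`. -/
def longCluster (d k : ℕ) (ω : Config d) (B : Set (Vert d)) : Set (Vert d) :=
  {w | w ∉ shortCluster d ω B ∧ ∃ v ∈ shortCluster d ω B,
    ∃ s : List (Fin d), s.length = k ∧ w = v ++ s ∧ ω (v, s) = true}

/-- `V^v`: the full subtree rooted at `v`. -/
def subtree {d : ℕ} (v : Vert d) : Set (Vert d) := {w | ∃ s : List (Fin d), w = v ++ s}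

/-- `V_Γ^v`: the subtree of height `k - 1` rooted at `v`. -/
def gammaSet (d k : ℕ) (v : Vert d) : Set (Vert d) :=
  {w | ∃ s : List (Fin d), s.length < k ∧ w = v ++ s}

/-- A set `B` of vertices is admissible if `B ⊆ V_Γ^u` for some (necessarily unique)
`u ∈ B`, called the base of `B`. -/
def Admissible (d k : ℕ) (B : Set (Vert d)) : Prop :=
  ∃ u ∈ B, B ⊆ gammaSet d k u

/-- The base `b(B)` of an admissible set `B`. -/
noncomputable def base (d k : ℕ) (B : Set (Vert d)) : Vert d :=
  haveI := Classical.dec (Admissible d k B)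
  if h : Admissible d k B then h.choose else []

/-- The relation on `C_ℓ^B`: `u` and `v` are related iff there is `w ∈ C_ℓ^B` with
`u, v ∈ V^w` (for admissible `B` this is an equivalence relation on `C_ℓ^B`). -/
def longRel (d k : ℕ) (ω : Config d) (B : Set (Vert d)) (u v : Vert d) : Prop :=
  u ∈ longCluster d k ω B ∧ v ∈ longCluster d k ω B ∧
    ∃ w ∈ longCluster d k ω B, u ∈ subtree w ∧ v ∈ subtree w

/-- `ℬ^B`: the collection of equivalence classes of `C_ℓ^B` under `longRel`. -/
def longClasses (d k : ℕ) (ω : Config d) (B : Set (Vert d)) : Set (Set (Vert d)) :=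
  {S | ∃ u ∈ longCluster d k ω B, S = {v | longRel d k ω B u v}}

/-- The type `t(B)` of an admissible set `B`: the set of words that must be concatenated
with the base of `B` to produce `B`. -/
noncomputable def typeOf (d k : ℕ) (B : Set (Vert d)) : Set (Vert d) :=
  {v | v ∈ gammaSet d k ([] : Vert d) ∧ base d k B ++ v ∈ B}

/-- `𝒜`: the set of types, i.e. admissible sets based at the root. -/
def typeSpace (d k : ℕ) : Set (Set (Vert d)) :=
  {A | ([] : Vert d) ∈ A ∧ A ⊆ gammaSet d k ([] : Vert d)}


section Aux

lemma mem_subtree_iff {d : ℕ} {v w : Vert d} : w ∈ subtree v ↔ v <+: w := by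
  constructor
  · rintro ⟨s, rfl⟩; exact ⟨s, rfl⟩
  · rintro ⟨s, rfl⟩; exact ⟨s, rfl⟩

lemma reflTrans_short_prefix {d : ℕ} {ω : Config d} {b z : Vert d}
    (h : Relation.ReflTransGen (shortStep d ω) b z) : b <+: z := by
  induction h with
  | refl => exact List.prefix_refl _
  | tail _ hs ih =>
    obtain ⟨s, _, rfl, _⟩ := hs
    exact ih.trans (List.prefix_append _ _)

lemma reflTrans_short_mid {d : ℕ} {ω : Config d} {b z : Vert d}
    (h : Relation.ReflTransGen (shortStep d ω) b z) :
    ∀ w, b <+: w → w <+: z → Relation.ReflTransGen (shortStep d ω) b w := by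
  induction h with
  | refl =>
    intro w h1 h2
    have : w = b := h2.eq_of_length (le_antisymm h2.length_le h1.length_le)
    rw [this]
  | @tail m z h1 hs ih =>
    intro w hbw hwz
    obtain ⟨s, hs1, rfl, hopen⟩ := hs
    rcases lt_or_ge w.length (m ++ s).length with hlt | hge
    · have hwm : w <+: m := by
        apply List.prefix_of_prefix_length_le hwz (List.prefix_append m s)
        simp only [List.length_append, hs1] at hlt ⊢
        omega
      exact ih w hbw hwm
    · have : w = m ++ s := hwz.eq_of_length (le_antisymm hwz.length_le hge)
      rw [this]
      exact h1.tail ⟨s, hs1, rfl, hopen⟩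

lemma shortCluster_prefix_closed {d k : ℕ} {ω : Config d} {B : Set (Vert d)}
    {u : Vert d} (hsub : B ⊆ gammaSet d k u) {z w : Vert d}
    (hz : z ∈ shortCluster d ω B) (hwz : w <+: z)
    (hlen : u.length + k ≤ w.length + 1) :
    w ∈ shortCluster d ω B := by
  obtain ⟨b, hbB, hbz⟩ := hz
  obtain ⟨s, hslen, hbs⟩ := hsub hbB
  have hblen : b.length ≤ w.length := by
    subst hbs
    simp only [List.length_append]
    omega
  have hbw : b <+: w :=
    List.prefix_of_prefix_length_le (reflTrans_short_prefix hbz) hwz hblen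
  exact ⟨b, hbB, reflTrans_short_mid hbz w hbw hwz⟩

lemma longCluster_length {d k : ℕ} {ω : Config d} {B : Set (Vert d)} {u : Vert d}
    (hsub : B ⊆ gammaSet d k u) {x : Vert d} (hx : x ∈ longCluster d k ω B) :
    u.length + k ≤ x.length := by
  obtain ⟨-, v, hv, s, hslen, rfl, -⟩ := hx
  obtain ⟨b, hbB, hbv⟩ := hv
  obtain ⟨t, htlen, hbt⟩ := hsub hbB
  have h1 := (reflTrans_short_prefix hbv).length_le
  subst hbt
  simp only [List.length_append] at *
  omega

lemma exists_min_long_prefix {d k : ℕ} {ω : Config d} {B : Set (Vert d)} {x : Vert d}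
    (hx : x ∈ longCluster d k ω B) :
    ∃ m ∈ longCluster d k ω B, m <+: x ∧
      ∀ w ∈ longCluster d k ω B, w <+: x → m <+: w := by
  classical
  have hne : {n : ℕ | ∃ w ∈ longCluster d k ω B, w <+: x ∧ w.length = n}.Nonempty :=
    ⟨x.length, x, hx, List.prefix_refl x, rfl⟩
  obtain ⟨n, hn, hmin⟩ := Nat.lt_wfRel.wf.has_min _ hne
  obtain ⟨m, hm, hmx, hml⟩ := hn
  refine ⟨m, hm, hmx, ?_⟩
  intro w hw hwx
  have h2 : ¬ w.length < n := hmin _ ⟨w, hw, hwx, rfl⟩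
  exact List.prefix_of_prefix_length_le hmx hwx (by omega)

lemma base_eq_of {d : ℕ} (k : ℕ) {B : Set (Vert d)} {u : Vert d}
    (hu : u ∈ B) (hsub : B ⊆ gammaSet d k u) : base d k B = u := by
  have hA : Admissible d k B := ⟨u, hu, hsub⟩
  unfold base
  rw [dif_pos hA]
  obtain ⟨hu', hsub'⟩ := hA.choose_spec
  obtain ⟨s, -, hs⟩ := hsub hu'
  obtain ⟨t, -, ht⟩ := hsub' hu
  have h1 := congrArg List.length hs
  have h2 := congrArg List.length ht
  simp only [List.length_append] at h1 h2
  have hs0 : s = [] := List.length_eq_zero_iff.1 (by omega)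
  rw [hs, hs0, List.append_nil]

end Aux

/-- **Lemma 3.6** (de Lima–Szabó–Valesin).  For any admissible set `B`:
(i) every equivalence class `B' ∈ ℬ^B` is admissible, and
(ii) the subtrees `V^{b(B')}`, `B' ∈ ℬ^B`, are pairwise disjoint and disjoint
from `C_s^B`. -/
theorem longClasses_admissible_and_disjoint (d k : ℕ) (hd : 2 ≤ d) (hk : 2 ≤ k)
    (ω : Config d) (B : Set (Vert d)) (hB : Admissible d k B) :
    (∀ B' ∈ longClasses d k ω B, Admissible d k B') ∧
    (∀ B' ∈ longClasses d k ω B, ∀ B'' ∈ longClasses d k ω B, B' ≠ B'' →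
      Disjoint (subtree (base d k B')) (subtree (base d k B''))) ∧
    (∀ B' ∈ longClasses d k ω B,
      Disjoint (subtree (base d k B')) (shortCluster d ω B)) := by
  obtain ⟨u, huB, huSub⟩ := hB
  have key : ∀ S ∈ longClasses d k ω B, ∃ m ∈ longCluster d k ω B,
      base d k S = m ∧ S = {v | v ∈ longCluster d k ω B ∧ m <+: v} ∧
      (∀ w ∈ longCluster d k ω B, w <+: m → w = m) ∧ Admissible d k S := by
    rintro S ⟨x, hx, rfl⟩
    obtain ⟨m, hm, hmx, hmin⟩ := exists_min_long_prefix hx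
    have hSeq : {v | longRel d k ω B x v}
        = {v | v ∈ longCluster d k ω B ∧ m <+: v} := by
      ext v
      constructor
      · rintro ⟨-, hv, w, hw, hwx, hwv⟩
        rw [mem_subtree_iff] at hwx hwv
        exact ⟨hv, (hmin w hw hwx).trans hwv⟩
      · rintro ⟨hv, hmv⟩
        exact ⟨hx, hv, m, hm, mem_subtree_iff.2 hmx, mem_subtree_iff.2 hmv⟩
    have hself : ∀ w ∈ longCluster d k ω B, w <+: m → w = m := by
      intro w hw hwm
      have h3 := hmin w hw (hwm.trans hmx)
      exact hwm.eq_of_length (le_antisymm hwm.length_le h3.length_le)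
    have hmlen : u.length + k ≤ m.length := longCluster_length huSub hm
    have hgam : {v | v ∈ longCluster d k ω B ∧ m <+: v} ⊆ gammaSet d k m := by
      rintro v ⟨hv, t, rfl⟩
      obtain ⟨hvns, v', hv', s, hslen, heq, hopen⟩ := hv
      have hv'lt : v'.length < m.length := by
        by_contra hcon
        push_neg at hcon
        have hmv' : m <+: v' :=
          List.prefix_of_prefix_length_le ⟨t, rfl⟩ ⟨s, heq.symm⟩ hcon
        exact hm.1 (shortCluster_prefix_closed huSub hv' hmv' (by omega))
      have hlenv := congrArg List.length heq
      simp only [List.length_append] at hlenv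
      exact ⟨t, by omega, rfl⟩
    have hmem : m ∈ {v | v ∈ longCluster d k ω B ∧ m <+: v} :=
      ⟨hm, List.prefix_refl m⟩
    have hadm : Admissible d k {v | longRel d k ω B x v} := by
      rw [hSeq]; exact ⟨m, hmem, hgam⟩
    have hbase : base d k {v | longRel d k ω B x v} = m := by
      rw [hSeq]; exact base_eq_of k hmem hgam
    exact ⟨m, hm, hbase, hSeq, hself, hadm⟩
  refine ⟨fun S hS => ?_, fun S1 h1 S2 h2 hne => ?_, fun S hS => ?_⟩
  · obtain ⟨m, hm, hb, hset, hmn, hadm⟩ := key S hS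
    exact hadm
  · obtain ⟨m1, hm1, hb1, hset1, hmin1, -⟩ := key S1 h1
    obtain ⟨m2, hm2, hb2, hset2, hmin2, -⟩ := key S2 h2
    rw [hb1, hb2, Set.disjoint_left]
    rintro z hz1 hz2
    rw [mem_subtree_iff] at hz1 hz2
    apply hne
    rcases le_total m1.length m2.length with hle | hle
    · have h12 : m1 <+: m2 := List.prefix_of_prefix_length_le hz1 hz2 hle
      have : m1 = m2 := hmin2 m1 hm1 h12
      rw [hset1, hset2, this]
    · have h21 : m2 <+: m1 := List.prefix_of_prefix_length_le hz2 hz1 hle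
      have : m2 = m1 := hmin1 m2 hm2 h21
      rw [hset1, hset2, this]
  · obtain ⟨m, hm, hb, -, -, -⟩ := key S hS
    rw [hb, Set.disjoint_left]
    rintro z hz hzs
    rw [mem_subtree_iff] at hz
    have hmlen : u.length + k ≤ m.length := longCluster_length huSub hm
    exact hm.1 (shortCluster_prefix_closed huSub hzs hz (by omega))
end
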